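/- arXiv:2509.22362 — 3 statements merged into one kernel-verified Lean document; each statement's English description precedes it below -/
import Mathlib

section
/- Let X ⊂ ℝⁿ be a finite set, let 0 < ε < 1, and suppose that for every x ∈ X one has min_{Y⊆X∖{x}, |Y|=k} max_{y∈Y} ‖x−y‖² ≤ ((1−ε)/(1+ε)) · min_{Y⊆X∖{x}, |Y|=k+1} max_{y∈Y} ‖x−y‖². Let A ∈ ℝ^{m×n} be a random matrix with i.i.d. entries A_{ij} ~ N(0, 1/m). Then the map ψ: x ↦ Ax is a graph isomorphism between the k-nearest neighbor graphs G_k(X) and G_k(AX), where AX = {Ax : x ∈ X}, with probability at least 1 − |X|(|X|−1)·exp((m/4)(ε³ − ε²)). -/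
open MeasureTheory ProbabilityTheory
open Real
open scoped ENNReal NNReal

/-- The Euclidean (`L²`) norm of a vector in `ℝ^k`. -/
noncomputable def euclNorm {k : ℕ} (x : Fin k → ℝ) : ℝ := Real.sqrt (∑ i, x i ^ 2)

/-- The Euclidean distance between two vectors in `ℝ^k`. -/
noncomputable def distE {k : ℕ} (a b : Fin k → ℝ) : ℝ := euclNorm (a - b)

/-- Matrix-vector multiplication, viewing a matrix as a function of its rows. -/
def matVec {m n : ℕ} (A : Fin m → Fin n → ℝ) (x : Fin n → ℝ) : Fin m → ℝ :=
  fun i => ∑ j, A i j * x j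

/-- The law of a random `m × n` matrix with i.i.d. centered Gaussian entries of variance `v`. -/
noncomputable def gaussMat (m n : ℕ) (v : NNReal) : Measure (Fin m → Fin n → ℝ) :=
  Measure.pi fun _ : Fin m => Measure.pi fun _ : Fin n => gaussianReal 0 v

/-- `min_{Y ⊆ X∖{x}, |Y| = k} max_{y ∈ Y} f x y`, formalized with `sInf`/`sSup` over `ℝ`. -/
noncomputable def kMinMax {V : Type*} [DecidableEq V] (f : V → V → ℝ)
    (X : Finset V) (k : ℕ) (x : V) : ℝ :=
  sInf {r : ℝ | ∃ Y : Finset V, Y ⊆ X.erase x ∧ Y.card = k ∧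
    r = sSup {s : ℝ | ∃ y ∈ Y, s = f x y}}

/-- `y` is among the `k` points of `X ∖ {x}` closest to `x` (w.r.t. the distance `f`):
fewer than `k` points of `X ∖ {x}` are strictly closer to `x` than `y` is. -/
def NearK {V : Type*} [DecidableEq V] (f : V → V → ℝ) (X : Finset V) (k : ℕ) (x y : V) : Prop :=
  y ∈ X.erase x ∧ ((X.erase x).filter (fun z => f x z < f x y)).card < k

/-- Adjacency in the `k`-nearest neighbor graph `G_k(X)` (w.r.t. the distance `f`). -/
def KNNAdj {V : Type*} [DecidableEq V] (f : V → V → ℝ) (X : Finset V) (k : ℕ) (x y : V) : Prop :=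
  x ≠ y ∧ x ∈ X ∧ y ∈ X ∧ (NearK f X k x y ∨ NearK f X k y x)

/-- `ψ` is a graph isomorphism between `G_k(X)` and `G_k(ψ(X))`: it is a bijection of `X`
onto its image preserving and reflecting `k`-NN adjacency. -/
def IsKNNIso {V W : Type*} [DecidableEq V] [DecidableEq W]
    (fV : V → V → ℝ) (fW : W → W → ℝ) (X : Finset V) (k : ℕ) (ψ : V → W) : Prop :=
  Set.InjOn ψ X ∧
    ∀ x ∈ X, ∀ y ∈ X, (KNNAdj fV X k x y ↔ KNNAdj fW (X.image ψ) k (ψ x) (ψ y))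


lemma aux_log1 {x : ℝ} (hx : 0 ≤ x) : Real.log (1+x) ≤ x - x^2/2 + x^3/3 := by
  set F : ℝ → ℝ := fun t => t - t^2/2 + t^3/3 - Real.log (1+t) with hF
  have hder : ∀ y ∈ Set.Ici (0:ℝ), HasDerivAt F (1 - y + y^2 - (1+y)⁻¹) y := by
    intro y hy
    have h1 : (0:ℝ) < 1 + y := by have := hy.out; linarith
    have hlog : HasDerivAt (fun t : ℝ => Real.log (1+t)) ((1+y)⁻¹) y := by
      have := (Real.hasDerivAt_log (ne_of_gt h1)).comp y ((hasDerivAt_id y).const_add 1)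
      exact this.congr_deriv (by simp)
    have hpoly : HasDerivAt (fun t : ℝ => t - t^2/2 + t^3/3) (1 - y + y^2) y := by
      have h2 := (hasDerivAt_pow 2 y).div_const 2
      have h3 := (hasDerivAt_pow 3 y).div_const 3
      have := ((hasDerivAt_id y).sub h2).add h3
      exact this.congr_deriv (by ring)
    exact hpoly.sub hlog
  have hmono : MonotoneOn F (Set.Ici 0) := by
    apply monotoneOn_of_deriv_nonneg (convex_Ici 0)
    · exact fun y hy => (hder y hy).continuousAt.continuousWithinAt
    · intro y hy
      rw [interior_Ici] at hy
      exact (hder y (Set.mem_Ici.2 (le_of_lt (Set.mem_Ioi.1 hy)))).differentiableAt.differentiableWithinAt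
    · intro y hy
      rw [interior_Ici] at hy
      rw [(hder y (Set.mem_Ici.2 (le_of_lt (Set.mem_Ioi.1 hy)))).deriv]
      have h1 : (0:ℝ) < 1 + y := by have : (0:ℝ) < y := hy; linarith
      have : (1+y)⁻¹ ≤ 1 - y + y^2 := by
        rw [inv_le_iff_one_le_mul₀ h1]
        nlinarith [(Set.mem_Ioi.1 hy).le]
      linarith
  have h0 : F 0 = 0 := by simp [hF]
  have := hmono (Set.self_mem_Ici) (hx : x ∈ Set.Ici (0:ℝ)) hx
  rw [h0] at this
  simp only [hF] at this
  linarith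

lemma aux_log2 {x : ℝ} (h0 : 0 ≤ x) (h1 : x < 1) : Real.log (1-x) ≤ -x - x^2/2 := by
  set F : ℝ → ℝ := fun t => -t - t^2/2 - Real.log (1-t) with hF
  have hder : ∀ y ∈ Set.Icc (0:ℝ) x, HasDerivAt F (-1 - y + (1-y)⁻¹) y := by
    intro y hy
    have hy1 : (0:ℝ) < 1 - y := by have := hy.2; linarith
    have hlog : HasDerivAt (fun t : ℝ => Real.log (1-t)) (-(1-y)⁻¹) y := by
      have hin : HasDerivAt (fun t : ℝ => 1 - t) (-1 : ℝ) y := by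
        simpa using (hasDerivAt_id y).const_sub 1
      have := (Real.hasDerivAt_log (ne_of_gt hy1)).comp y hin
      exact this.congr_deriv (by ring)
    have hpoly : HasDerivAt (fun t : ℝ => -t - t^2/2) (-1 - y) y := by
      have h2 := (hasDerivAt_pow 2 y).div_const 2
      have := ((hasDerivAt_id y).neg).sub h2
      exact this.congr_deriv (by ring)
    have := hpoly.sub hlog
    exact this.congr_deriv (by ring)
  have hmono : MonotoneOn F (Set.Icc 0 x) := by
    apply monotoneOn_of_deriv_nonneg (convex_Icc 0 x)
    · exact fun y hy => (hder y hy).continuousAt.continuousWithinAt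
    · intro y hy
      rw [interior_Icc] at hy
      exact (hder y ⟨hy.1.le, hy.2.le⟩).differentiableAt.differentiableWithinAt
    · intro y hy
      rw [interior_Icc] at hy
      rw [(hder y ⟨hy.1.le, hy.2.le⟩).deriv]
      have hy1 : (0:ℝ) < 1 - y := by have := hy.2; linarith
      have : 1 + y ≤ (1-y)⁻¹ := by
        rw [show (1-y)⁻¹ = 1/(1-y) by ring, le_div_iff₀ hy1]
        nlinarith [hy.1.le]
      linarith
  have h0' : F 0 = 0 := by simp [hF]
  have hx : x ∈ Set.Icc (0:ℝ) x := ⟨h0, le_refl x⟩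
  have := hmono ⟨le_refl 0, h0⟩ hx h0
  rw [h0'] at this
  simp only [hF] at this
  linarith

lemma aux_one (v : NNReal) (hv : v ≠ 0) (β c u : ℝ) (h : 0 < 1 - 2*β*(v:ℝ)*u^2) :
    ∫⁻ a, ENNReal.ofReal (Real.exp (β * (c + a*u)^2)) ∂(gaussianReal 0 v)
      = ENNReal.ofReal ((Real.sqrt (1 - 2*β*(v:ℝ)*u^2))⁻¹ *
          Real.exp (β*c^2 / (1 - 2*β*(v:ℝ)*u^2))) := by
  have hv0 : (0:ℝ) < (v:ℝ) := by positivity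
  set D : ℝ := 1 - 2*β*(v:ℝ)*u^2 with hD
  set α : ℝ := D / (2*(v:ℝ)) with hα
  have hα0 : 0 < α := by positivity
  set δ : ℝ := β*c*u/α with hδ
  set K : ℝ := β*c^2/D with hK
  have hmeas : Measurable fun a : ℝ => ENNReal.ofReal (Real.exp (β * (c + a*u)^2)) := by
    measurability
  rw [gaussianReal_of_var_ne_zero 0 hv,
    lintegral_withDensity_eq_lintegral_mul _ (measurable_gaussianPDF 0 v) hmeas]
  have hpt : ∀ a : ℝ, (gaussianPDF 0 v * fun a => ENNReal.ofReal (rexp (β * (c + a*u)^2))) a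
      = ENNReal.ofReal ((Real.sqrt (2*π*(v:ℝ)))⁻¹ * Real.exp K * Real.exp (-α*(a-δ)^2)) := by
    intro a
    simp only [Pi.mul_apply, gaussianPDF, gaussianPDFReal]
    rw [← ENNReal.ofReal_mul (by positivity)]
    congr 1
    rw [mul_assoc, ← Real.exp_add]
    rw [mul_assoc _ (rexp K), ← Real.exp_add]
    congr 1
    rw [Real.exp_eq_exp]
    have hD0 : D ≠ 0 := ne_of_gt h
    have hv0' : (v:ℝ) ≠ 0 := ne_of_gt hv0
    have hα0' : α ≠ 0 := ne_of_gt hα0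
    simp only [hK, hδ, hα]
    field_simp
    ring
  simp only [hpt]
  have hint : Integrable (fun a : ℝ =>
      (Real.sqrt (2*π*(v:ℝ)))⁻¹ * Real.exp K * Real.exp (-α*(a-δ)^2)) :=
    ((integrable_exp_neg_mul_sq hα0).comp_sub_right δ).const_mul _
  rw [← ofReal_integral_eq_lintegral_ofReal hint (Filter.Eventually.of_forall fun a => by positivity)]
  congr 1
  rw [integral_const_mul]
  have : (∫ a : ℝ, Real.exp (-α*(a-δ)^2)) = ∫ a : ℝ, Real.exp (-α*a^2) :=
    integral_sub_right_eq_self (fun a => Real.exp (-α*a^2)) δ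
  rw [this, integral_gaussian]
  have hsq : Real.sqrt (π/α) = Real.sqrt (2*π*(v:ℝ)) / Real.sqrt D := by
    rw [← Real.sqrt_div (by positivity)]
    congr 1
    field_simp [hα]
    rw [hα]; field_simp
  rw [hsq]
  have h1 : Real.sqrt (2*π*(v:ℝ)) ≠ 0 := by positivity
  have h2 : Real.sqrt D ≠ 0 := by positivity
  field_simp

lemma aux_row (v : NNReal) (hv : v ≠ 0) :
    ∀ (n : ℕ) (u : Fin n → ℝ) (t c : ℝ), 0 < 1 - 2*t*(v:ℝ)*(∑ j, u j^2) →
    ∫⁻ a, ENNReal.ofReal (Real.exp (t * (c + ∑ j, u j * a j)^2))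
        ∂(Measure.pi fun _ : Fin n => gaussianReal 0 v)
      = ENNReal.ofReal ((Real.sqrt (1 - 2*t*(v:ℝ)*(∑ j, u j^2)))⁻¹ *
          Real.exp (t*c^2 / (1 - 2*t*(v:ℝ)*(∑ j, u j^2)))) := by
  intro n
  induction n with
  | zero =>
    intro u t c h
    simp [lintegral_const]
  | succ n ih =>
    intro u t c h
    set S' : ℝ := ∑ j : Fin n, u (Fin.succ j) ^ 2 with hS'
    have hSS : (∑ j : Fin (n+1), u j ^ 2) = u 0 ^ 2 + S' := Fin.sum_univ_succ _
    set D : ℝ := 1 - 2*t*(v:ℝ)*(∑ j : Fin (n+1), u j^2) with hDdef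
    set D' : ℝ := 1 - 2*t*(v:ℝ)*S' with hD'def
    have hS'0 : 0 ≤ S' := Finset.sum_nonneg fun j _ => sq_nonneg _
    have hu0 : 0 ≤ u 0 ^ 2 := sq_nonneg _
    have hv0 : (0:ℝ) < (v:ℝ) := by positivity
    have hD' : 0 < D' := by
      rcases le_or_gt t 0 with ht | ht
      · have : 0 ≤ -2*t*(v:ℝ)*S' := by
          apply mul_nonneg _ hS'0
          nlinarith
        simp only [hD'def]; nlinarith
      · have : 2*t*(v:ℝ)*S' ≤ 2*t*(v:ℝ)*(∑ j : Fin (n+1), u j^2) := by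
          apply mul_le_mul_of_nonneg_left _ (by positivity)
          nlinarith
        simp only [hD'def]; simp only [hDdef] at h; nlinarith
    set β : ℝ := t / D' with hβ
    set T := MeasurableEquiv.piFinSuccAbove (fun _ : Fin (n+1) => ℝ) 0 with hT
    have hmp := measurePreserving_piFinSuccAbove (fun _ : Fin (n+1) => gaussianReal 0 v) 0
    set G : ℝ × (Fin n → ℝ) → ℝ≥0∞ := fun p =>
      ENNReal.ofReal (Real.exp (t * ((c + u 0 * p.1) + ∑ j, u (Fin.succ j) * p.2 j)^2)) with hG
    have hGmeas : Measurable G := by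
      apply ENNReal.measurable_ofReal.comp
      apply Real.measurable_exp.comp
      apply Measurable.const_mul
      apply Measurable.pow_const
      apply Measurable.add
      · exact measurable_const.add (measurable_fst.const_mul _)
      · exact Finset.measurable_sum _ fun j _ =>
          ((measurable_pi_apply j).comp measurable_snd).const_mul _
    have key : ∫⁻ a, ENNReal.ofReal (Real.exp (t * (c + ∑ j, u j * a j)^2))
        ∂(Measure.pi fun _ : Fin (n+1) => gaussianReal 0 v)
        = ∫⁻ p, G p ∂((gaussianReal 0 v).prod (Measure.pi fun _ : Fin n => gaussianReal 0 v)) := by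
      rw [← hmp.lintegral_comp hGmeas]
      apply lintegral_congr
      intro a
      simp only [hG, hT, MeasurableEquiv.piFinSuccAbove_apply, Fin.succAbove_zero,
        Fin.insertNthEquiv_zero, Fin.consEquiv, Equiv.coe_fn_symm_mk, Fin.tail]
      congr 2
      rw [Fin.sum_univ_succ]
      ring
    rw [key, lintegral_prod _ hGmeas.aemeasurable]
    have inner : ∀ x : ℝ, (∫⁻ y, G (x, y) ∂(Measure.pi fun _ : Fin n => gaussianReal 0 v))
        = ENNReal.ofReal ((Real.sqrt D')⁻¹) * ENNReal.ofReal (Real.exp (β * (c + x * u 0)^2)) := by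
      intro x
      have := ih (fun j => u (Fin.succ j)) t (c + u 0 * x) (by exact hD')
      simp only [hG]
      rw [this, ← ENNReal.ofReal_mul (by positivity)]
      rw [show (1 - 2*t*(v:ℝ)*∑ j : Fin n, (fun j => u (Fin.succ j)) j ^ 2) = D' from rfl, hβ]
      congr 2
      rw [Real.exp_eq_exp]
      ring
    simp only [inner]
    rw [lintegral_const_mul _ (by
      apply ENNReal.measurable_ofReal.comp
      apply Real.measurable_exp.comp
      exact (((measurable_const.add (measurable_id.mul_const _))).pow_const 2).const_mul β)]
    have hcond : 0 < 1 - 2*β*(v:ℝ)*(u 0)^2 := by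
      have : 1 - 2*β*(v:ℝ)*(u 0)^2 = D / D' := by
        simp only [hβ, hDdef, hD'def, hSS]
        have hD'ne : 1 - 2*t*(v:ℝ)*S' ≠ 0 := ne_of_gt hD'
        field_simp
        ring
      rw [this]
      exact div_pos h hD'
    rw [aux_one v hv β c (u 0) hcond]
    rw [← ENNReal.ofReal_mul (by positivity)]
    congr 1
    have hratio : 1 - 2*β*(v:ℝ)*(u 0)^2 = D / D' := by
      simp only [hβ, hDdef, hD'def, hSS]
      have hD'ne : 1 - 2*t*(v:ℝ)*S' ≠ 0 := ne_of_gt hD'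
      field_simp
      ring
    rw [hratio, Real.sqrt_div h.le]
    have h1 : Real.sqrt D' ≠ 0 := by positivity
    have h2 : Real.sqrt D ≠ 0 := by positivity
    have hD0 : D ≠ 0 := ne_of_gt h
    have hD'0 : D' ≠ 0 := ne_of_gt hD'
    have hargs : β*c^2/(D/D') = t*c^2/D := by
      simp only [hβ]; field_simp
    rw [hargs]
    field_simp

lemma exists_kSmallest {V : Type*} [DecidableEq V] (g : V → ℝ) (E : Finset V) :
    ∀ k : ℕ, k ≤ E.card → ∃ Y : Finset V, Y ⊆ E ∧ Y.card = k ∧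
      ∀ z ∈ Y, ∀ w ∈ E, w ∉ Y → g z ≤ g w := by
  intro k
  induction k with
  | zero => exact fun _ => ⟨∅, by simp⟩
  | succ k ih =>
    intro hk
    obtain ⟨Y, hYE, hYc, hY⟩ := ih (Nat.le_of_succ_le hk)
    have hne : (E \ Y).Nonempty := by
      rw [← Finset.card_pos, Finset.card_sdiff_of_subset hYE, hYc]
      omega
    obtain ⟨w₀, hw₀, hmin⟩ := Finset.exists_min_image (E \ Y) g hne
    rw [Finset.mem_sdiff] at hw₀
    refine ⟨insert w₀ Y, ?_, ?_, ?_⟩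
    · exact Finset.insert_subset hw₀.1 hYE
    · rw [Finset.card_insert_of_notMem hw₀.2, hYc]
    · intro z hz w hw hwni
      have hwY : w ∉ Y := fun h => hwni (Finset.mem_insert_of_mem h)
      rcases Finset.mem_insert.1 hz with rfl | hzY
      · exact hmin w (Finset.mem_sdiff.2 ⟨hw, hwY⟩)
      · exact hY z hzY w hw hwY

lemma aux_comb {V W : Type*} [DecidableEq V] [DecidableEq W]
    (f : V → V → ℝ) (fW : W → W → ℝ) (X : Finset V) (k : ℕ) (ψ : V → W) (ε : ℝ)
    (hε0 : 0 < ε) (hε1 : ε < 1)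
    (hfpos : ∀ x ∈ X, ∀ y ∈ X, x ≠ y → 0 < f x y)
    (hW0 : ∀ w : W, fW w w = 0)
    (hdist : ∀ x ∈ X, ∀ y ∈ X, x ≠ y →
      (1-ε) * f x y < fW (ψ x) (ψ y) ∧ fW (ψ x) (ψ y) < (1+ε) * f x y)
    (hgap : ∀ x ∈ X, kMinMax f X k x ≤ (1-ε)/(1+ε) * kMinMax f X (k+1) x) :
    IsKNNIso f fW X k ψ := by
  have hinj : Set.InjOn ψ X := by
    intro x hx y hy hxy
    by_contra hne
    have h1 := (hdist x hx y hy hne).1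
    rw [hxy, hW0] at h1
    nlinarith [hfpos x hx y hy hne]
  have hnear : ∀ x ∈ X, ∀ y ∈ X, x ≠ y →
      (NearK f X k x y ↔ NearK fW (X.image ψ) k (ψ x) (ψ y)) := by
    intro x hx y hy hxy
    set E := X.erase x with hE
    have hEX : E ⊆ X := Finset.erase_subset x X
    have himg : (X.image ψ).erase (ψ x) = E.image ψ := by
      ext w
      simp only [Finset.mem_erase, Finset.mem_image, hE]
      constructor
      · rintro ⟨hwne, z, hz, rfl⟩
        exact ⟨z, ⟨fun h => hwne (by rw [h]), hz⟩, rfl⟩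
      · rintro ⟨z, hz, rfl⟩
        exact ⟨fun h => hz.1 (hinj hz.2 hx h), z, hz.2, rfl⟩
    have hmemiff : ψ y ∈ (X.image ψ).erase (ψ x) ↔ y ∈ E := by
      rw [himg]
      constructor
      · rintro h
        obtain ⟨z, hz, hzy⟩ := Finset.mem_image.1 h
        rwa [← hinj (hEX hz) hy hzy]
      · exact fun h => Finset.mem_image_of_mem ψ h
    have hcount : ∀ y' : V,
        (((X.image ψ).erase (ψ x)).filter (fun w => fW (ψ x) w < fW (ψ x) (ψ y'))).card
          = (E.filter (fun z => fW (ψ x) (ψ z) < fW (ψ x) (ψ y'))).card := by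
      intro y'
      rw [himg, Finset.filter_image]
      exact Finset.card_image_of_injOn (hinj.mono (fun z hz => hEX (Finset.mem_of_mem_filter z hz)))
    unfold NearK
    rw [hmemiff, hcount, ← hE]
    by_cases hy' : y ∈ E
    swap
    · simp [hy']
    simp only [hy', true_and]
    have hyX : y ∈ X := hEX hy'
    -- main counting iff
    rcases Nat.eq_zero_or_pos k with rfl | hk
    · simp
    by_cases hcard : E.card ≤ k
    · have hbound : ∀ (p : V → Prop) (_ : ∀ z, p z → ¬ (z = y)) [DecidablePred p],
          (E.filter p).card < k := by
        intro p hp _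
        have hsub : E.filter p ⊆ E.erase y := by
          intro z hz
          rw [Finset.mem_filter] at hz
          exact Finset.mem_erase.2 ⟨fun h => hp z hz.2 h, hz.1⟩
        have h1 : (E.filter p).card ≤ (E.erase y).card := Finset.card_le_card hsub
        rw [Finset.card_erase_of_mem hy'] at h1
        have : 1 ≤ E.card := Finset.card_pos.2 ⟨y, hy'⟩
        omega
      constructor
      · intro _
        exact hbound _ (fun z hz h => by subst h; exact lt_irrefl _ hz)
      · intro _
        exact hbound _ (fun z hz h => by subst h; exact lt_irrefl _ hz)
    · push_neg at hcard
      obtain ⟨Y, hYE, hYc, hsep⟩ := exists_kSmallest (f x) E k (by omega)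
      obtain ⟨Y', hY'E, hY'c, hsep'⟩ := exists_kSmallest (f x) E (k+1) (by omega)
      have hYne : Y.Nonempty := Finset.card_pos.1 (by omega)
      have hY'ne : Y'.Nonempty := Finset.card_pos.1 (by omega)
      obtain ⟨z₀, hz₀Y, hdY⟩ := Finset.exists_max_image Y (f x) hYne
      obtain ⟨z₀', hz₀'Y, hd'Y⟩ := Finset.exists_max_image Y' (f x) hY'ne
      set d := f x z₀ with hd
      set d' := f x z₀' with hd'
      have hgreat' : IsGreatest {s : ℝ | ∃ y ∈ Y', s = f x y} d' :=
        ⟨⟨z₀', hz₀'Y, rfl⟩, by rintro s ⟨z, hz, rfl⟩; exact hd'Y z hz⟩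
      have hFd : (E.filter (fun z => f x z < d)).card < k := by
        have hsub : E.filter (fun z => f x z < d) ⊆ Y.erase z₀ := by
          intro z hz
          rw [Finset.mem_filter] at hz
          have hzY : z ∈ Y := by
            by_contra hzY
            exact absurd (hsep z₀ hz₀Y z hz.1 hzY) (not_le.2 hz.2)
          exact Finset.mem_erase.2 ⟨fun h => by subst h; exact lt_irrefl _ hz.2, hzY⟩
        have := Finset.card_le_card hsub
        rw [Finset.card_erase_of_mem hz₀Y, hYc] at this
        omega
      have hFd' : (E.filter (fun z => f x z < d')).card ≤ k := by
        have hsub : E.filter (fun z => f x z < d') ⊆ Y'.erase z₀' := by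
          intro z hz
          rw [Finset.mem_filter] at hz
          have hzY : z ∈ Y' := by
            by_contra hzY
            exact absurd (hsep' z₀' hz₀'Y z hz.1 hzY) (not_le.2 hz.2)
          exact Finset.mem_erase.2 ⟨fun h => by subst h; exact lt_irrefl _ hz.2, hzY⟩
        have := Finset.card_le_card hsub
        rw [Finset.card_erase_of_mem hz₀'Y, hY'c] at this
        omega
      have hbdd : ∀ Y₁ : Finset V, Y₁.Nonempty →
          ∃ b ∈ Y₁, IsGreatest {s : ℝ | ∃ y ∈ Y₁, s = f x y} (f x b) := by
        intro Y₁ hY₁ne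
        obtain ⟨b, hb, hbmax⟩ := Finset.exists_max_image Y₁ (f x) hY₁ne
        exact ⟨b, hb, ⟨b, hb, rfl⟩, by rintro s ⟨z, hz, rfl⟩; exact hbmax z hz⟩
      have hd_le_kmin : d ≤ kMinMax f X k x := by
        apply le_csInf
        · exact ⟨_, Y, hYE, hYc, rfl⟩
        · rintro r ⟨Y₁, hY₁E, hY₁c, rfl⟩
          have hY₁ne : Y₁.Nonempty := Finset.card_pos.1 (by omega)
          have hex : ∃ z ∈ Y₁, d ≤ f x z := by
            by_contra hno
            push_neg at hno
            have hsub : Y₁ ⊆ E.filter (fun z => f x z < d) :=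
              fun z hz => Finset.mem_filter.2 ⟨hY₁E hz, hno z hz⟩
            have := Finset.card_le_card hsub
            omega
          obtain ⟨z, hzY₁, hdz⟩ := hex
          obtain ⟨b, _, hbgr⟩ := hbdd Y₁ hY₁ne
          exact hdz.trans (le_csSup hbgr.bddAbove ⟨z, hzY₁, rfl⟩)
      have hkmin_le_d' : kMinMax f X (k+1) x ≤ d' := by
        apply csInf_le
        · have hEne : E.Nonempty := ⟨y, hy'⟩
          obtain ⟨bE, hbE, hbEmin⟩ := Finset.exists_min_image E (f x) hEne
          refine ⟨f x bE, ?_⟩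
          rintro r ⟨Y₁, hY₁E, hY₁c, rfl⟩
          have hY₁ne : Y₁.Nonempty := Finset.card_pos.1 (by omega)
          obtain ⟨b, hbY₁, hbgr⟩ := hbdd Y₁ hY₁ne
          rw [hbgr.csSup_eq]
          exact hbEmin b (hY₁E hbY₁)
        · exact ⟨Y', hY'E, hY'c, hgreat'.csSup_eq.symm⟩
      have hd'pos : 0 < d' := by
        have hz₀'E := Finset.mem_erase.1 (hY'E hz₀'Y)
        exact hfpos x hx z₀' (hEX (hY'E hz₀'Y)) (Ne.symm hz₀'E.1)
      have hchain : d ≤ (1-ε)/(1+ε) * d' := by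
        refine (hd_le_kmin.trans (hgap x hx)).trans ?_
        exact mul_le_mul_of_nonneg_left hkmin_le_d'
          (div_nonneg (by linarith) (by linarith))
      have hdd' : d < d' := by
        have hc1 : (1-ε)/(1+ε) < 1 := by
          rw [div_lt_one (by linarith)]
          linarith
        nlinarith
      have hkey : (1+ε) * d ≤ (1-ε) * d' := by
        have h1 : (1+ε) * d ≤ (1+ε) * ((1-ε)/(1+ε) * d') :=
          mul_le_mul_of_nonneg_left hchain (by linarith)
        have h2 : (1+ε) * ((1-ε)/(1+ε) * d') = (1-ε) * d' := by
          field_simp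
        linarith
      constructor
      · -- forward
        intro hlt
        have hfyd : f x y ≤ d := by
          by_contra hgt
          push_neg at hgt
          have hsub : Y ⊆ E.filter (fun z => f x z < f x y) :=
            fun z hz => Finset.mem_filter.2 ⟨hYE hz, lt_of_le_of_lt (hdY z hz) hgt⟩
          have := Finset.card_le_card hsub
          omega
        have hsub : E.filter (fun z => fW (ψ x) (ψ z) < fW (ψ x) (ψ y))
            ⊆ (E.filter (fun z => f x z < d')).erase y := by
          intro z hz
          rw [Finset.mem_filter] at hz
          have hzX : z ∈ X := hEX hz.1
          have hzx : x ≠ z := by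
            have := Finset.mem_erase.1 hz.1
            exact Ne.symm this.1
          have hyx : x ≠ y := by
            have := Finset.mem_erase.1 hy'
            exact Ne.symm this.1
          have hgz := (hdist x hx z hzX hzx).1
          have hgy := (hdist x hx y hyX hyx).2
          have hfz : f x z < d' := by
            have hch : (1-ε) * f x z < (1-ε) * d' := by
              calc (1-ε) * f x z < fW (ψ x) (ψ z) := hgz
                _ < fW (ψ x) (ψ y) := hz.2
                _ < (1+ε) * f x y := hgy
                _ ≤ (1+ε) * d := mul_le_mul_of_nonneg_left hfyd (by linarith)
                _ ≤ (1-ε) * d' := hkey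
            have h1ε : (0:ℝ) < 1 - ε := by linarith
            exact lt_of_mul_lt_mul_left hch h1ε.le
          refine Finset.mem_erase.2 ⟨fun h => ?_, Finset.mem_filter.2 ⟨hz.1, hfz⟩⟩
          subst h
          exact lt_irrefl _ hz.2
        have h1 := Finset.card_le_card hsub
        have hymem : y ∈ E.filter (fun z => f x z < d') :=
          Finset.mem_filter.2 ⟨hy', lt_of_le_of_lt hfyd hdd'⟩
        rw [Finset.card_erase_of_mem hymem] at h1
        omega
      · -- backward
        intro hlt
        by_contra hge
        push_neg at hge
        have hfyd' : d' ≤ f x y := by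
          by_contra hgt
          push_neg at hgt
          have hsub : E.filter (fun z => f x z < f x y)
              ⊆ (E.filter (fun z => f x z < d')).erase y := by
            intro z hz
            rw [Finset.mem_filter] at hz
            refine Finset.mem_erase.2 ⟨fun h => ?_, Finset.mem_filter.2 ⟨hz.1, hz.2.trans hgt⟩⟩
            subst h
            exact lt_irrefl _ hz.2
          have h1 := Finset.card_le_card hsub
          have hymem : y ∈ E.filter (fun z => f x z < d') :=
            Finset.mem_filter.2 ⟨hy', hgt⟩
          rw [Finset.card_erase_of_mem hymem] at h1
          omega
        have hsub : Y ⊆ E.filter (fun z => fW (ψ x) (ψ z) < fW (ψ x) (ψ y)) := by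
          intro z hz
          have hzE : z ∈ E := hYE hz
          have hzX : z ∈ X := hEX hzE
          have hzx : x ≠ z := Ne.symm (Finset.mem_erase.1 hzE).1
          have hyx : x ≠ y := Ne.symm (Finset.mem_erase.1 hy').1
          have hgz := (hdist x hx z hzX hzx).2
          have hgy := (hdist x hx y hyX hyx).1
          refine Finset.mem_filter.2 ⟨hzE, ?_⟩
          calc fW (ψ x) (ψ z) < (1+ε) * f x z := hgz
            _ ≤ (1+ε) * d := mul_le_mul_of_nonneg_left (hdY z hz) (by linarith)
            _ ≤ (1-ε) * d' := hkey
            _ ≤ (1-ε) * f x y := mul_le_mul_of_nonneg_left hfyd' (by linarith)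
            _ < fW (ψ x) (ψ y) := hgy
        have := Finset.card_le_card hsub
        omega
  refine ⟨hinj, fun x hx y hy => ?_⟩
  constructor
  · rintro ⟨hne, _, _, h⟩
    exact ⟨fun heq => hne (hinj hx hy heq), Finset.mem_image_of_mem ψ hx,
      Finset.mem_image_of_mem ψ hy,
      h.imp (fun hh => (hnear x hx y hy hne).1 hh) (fun hh => (hnear y hy x hx (Ne.symm hne)).1 hh)⟩
  · rintro ⟨hne, _, _, h⟩
    have hxy : x ≠ y := fun e => hne (by rw [e])
    exact ⟨hxy, hx, hy,
      h.imp (fun hh => (hnear x hx y hy hxy).2 hh) (fun hh => (hnear y hy x hx (Ne.symm hxy)).2 hh)⟩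

lemma aux_piprod {α : Type*} [MeasurableSpace α] (ν : Measure α) [IsProbabilityMeasure ν]
    (h : α → ℝ≥0∞) (hh : Measurable h) :
    ∀ N : ℕ, ∫⁻ x, ∏ i, h (x i) ∂(Measure.pi fun _ : Fin N => ν) = (∫⁻ a, h a ∂ν)^N := by
  intro N
  induction N with
  | zero => simp
  | succ N ih =>
    set G : α × (Fin N → α) → ℝ≥0∞ := fun p => h p.1 * ∏ j, h (p.2 j) with hG
    have hGmeas : Measurable G := by
      apply Measurable.mul (hh.comp measurable_fst)
      exact Finset.measurable_prod _ fun j _ => hh.comp ((measurable_pi_apply j).comp measurable_snd)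
    have hmp := measurePreserving_piFinSuccAbove (fun _ : Fin (N+1) => ν) 0
    have key : ∫⁻ x, ∏ i, h (x i) ∂(Measure.pi fun _ : Fin (N+1) => ν)
        = ∫⁻ p, G p ∂(ν.prod (Measure.pi fun _ : Fin N => ν)) := by
      rw [← hmp.lintegral_comp hGmeas]
      apply lintegral_congr
      intro a
      simp only [hG, MeasurableEquiv.piFinSuccAbove_apply, Fin.succAbove_zero,
        Fin.insertNthEquiv_zero, Fin.consEquiv, Equiv.coe_fn_symm_mk, Fin.tail]
      rw [Fin.prod_univ_succ]
    rw [key, lintegral_prod _ hGmeas.aemeasurable]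
    simp only [hG]
    have inner : ∀ x : α, (∫⁻ y, h x * ∏ j, h (y j) ∂(Measure.pi fun _ : Fin N => ν))
        = h x * (∫⁻ a, h a ∂ν)^N := by
      intro x
      have hpm : Measurable fun y : Fin N → α => ∏ j, h (y j) :=
        Finset.measurable_prod _ fun j _ => hh.comp (measurable_pi_apply j)
      rw [lintegral_const_mul _ hpm, ih]
    simp only [inner]
    rw [lintegral_mul_const _ hh, pow_succ]
    ring

lemma aux_mat (m n : ℕ) (v : NNReal) (hv : v ≠ 0) (u : Fin n → ℝ) (t : ℝ)
    (h : 0 < 1 - 2*t*(v:ℝ)*(∑ j, u j^2)) :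
    ∫⁻ A, ENNReal.ofReal (Real.exp (t * ∑ i : Fin m, (∑ j, u j * A i j)^2)) ∂(gaussMat m n v)
      = ENNReal.ofReal ((Real.sqrt (1 - 2*t*(v:ℝ)*∑ j, u j^2))⁻¹) ^ m := by
  have hrw : ∀ A : Fin m → Fin n → ℝ,
      ENNReal.ofReal (Real.exp (t * ∑ i : Fin m, (∑ j, u j * A i j)^2))
        = ∏ i : Fin m, ENNReal.ofReal (Real.exp (t * (0 + ∑ j, u j * A i j)^2)) := by
    intro A
    rw [← ENNReal.ofReal_prod_of_nonneg (fun i _ => (Real.exp_pos _).le), ← Real.exp_sum]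
    congr 2
    rw [Finset.mul_sum]
    exact Finset.sum_congr rfl fun i _ => by ring
  simp only [hrw]
  unfold gaussMat
  have hhm : Measurable fun a : Fin n → ℝ =>
      ENNReal.ofReal (Real.exp (t * (0 + ∑ j, u j * a j)^2)) := by
    apply ENNReal.measurable_ofReal.comp
    apply Real.measurable_exp.comp
    apply Measurable.const_mul
    apply Measurable.pow_const
    exact measurable_const.add (Finset.measurable_sum _ fun j _ =>
      (measurable_pi_apply j).const_mul _)
  rw [aux_piprod _ _ hhm m, aux_row v hv n u t 0 h]
  congr 2
  norm_num

lemma aux_sqrt_exp (z : ℝ) : Real.sqrt (Real.exp z) = Real.exp (z/2) := by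
  rw [show Real.exp z = Real.exp (z/2) ^ 2 by rw [sq, ← Real.exp_add]; ring_nf,
    Real.sqrt_sq (Real.exp_pos _).le]

lemma aux_tail_up (m n : ℕ) (hm : 0 < m) (ε : ℝ) (hε0 : 0 < ε) (hε1 : ε < 1)
    (u : Fin n → ℝ) (hS : 0 < ∑ j, u j ^ 2) :
    (gaussMat m n (m : NNReal)⁻¹)
        {A | (1+ε) * (∑ j, u j^2) ≤ ∑ i : Fin m, (∑ j, u j * A i j)^2}
      ≤ ENNReal.ofReal (Real.exp ((m:ℝ)/4 * (ε^3 - ε^2))) := by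
  have hm0 : ((m:ℕ):ℝ) ≠ 0 := Nat.cast_ne_zero.2 hm.ne'
  have hmpos : (0:ℝ) < (m:ℝ) := by positivity
  set S := ∑ j, u j^2 with hSdef
  set v : NNReal := (m:NNReal)⁻¹ with hvdef
  have hv : v ≠ 0 := by
    simp only [hvdef, ne_eq, inv_eq_zero]
    exact Nat.cast_ne_zero.2 hm.ne'
  have hvr : (v:ℝ) = (m:ℝ)⁻¹ := by simp [hvdef]
  set t : ℝ := m*ε/(2*(1+ε)*S) with htdef
  have ht : 0 < t := by positivity
  have hDs : 1 - 2*t*(v:ℝ)*S = (1+ε)⁻¹ := by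
    rw [htdef, hvr]
    field_simp
    ring
  have hcond : 0 < 1 - 2*t*(v:ℝ)*S := by rw [hDs]; positivity
  have hmeas : Measurable fun A : Fin m → Fin n → ℝ =>
      ENNReal.ofReal (Real.exp (t * ∑ i, (∑ j, u j * A i j)^2)) := by
    apply ENNReal.measurable_ofReal.comp
    apply Real.measurable_exp.comp
    apply Measurable.const_mul
    exact Finset.measurable_sum _ fun i _ => (Finset.measurable_sum _ fun j _ =>
      ((measurable_pi_apply j).comp (measurable_pi_apply i)).const_mul _).pow_const 2
  have hsub : {A : Fin m → Fin n → ℝ | (1+ε) * S ≤ ∑ i, (∑ j, u j * A i j)^2}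
      ⊆ {A | ENNReal.ofReal (Real.exp (t * ((1+ε)*S)))
          ≤ ENNReal.ofReal (Real.exp (t * ∑ i, (∑ j, u j * A i j)^2))} := by
    intro A hA
    simp only [Set.mem_setOf_eq] at *
    exact ENNReal.ofReal_le_ofReal (Real.exp_le_exp.2 (mul_le_mul_of_nonneg_left hA ht.le))
  refine (measure_mono hsub).trans ?_
  refine (meas_ge_le_lintegral_div hmeas.aemeasurable
    (ENNReal.ofReal_pos.2 (Real.exp_pos _)).ne' ENNReal.ofReal_ne_top).trans ?_
  rw [aux_mat m n v hv u t hcond, hDs, Real.sqrt_inv, inv_inv,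
    ← ENNReal.ofReal_pow (Real.sqrt_nonneg _), ← ENNReal.ofReal_div_of_pos (Real.exp_pos _)]
  apply ENNReal.ofReal_le_ofReal
  have harg : t * ((1+ε)*S) = m*ε/2 := by
    rw [htdef]; field_simp
  rw [harg, div_le_iff₀ (Real.exp_pos _), ← Real.exp_add]
  have h1 : Real.sqrt (1+ε) = Real.exp (Real.log (1+ε) / 2) := by
    conv_lhs => rw [← Real.exp_log (show (0:ℝ) < 1+ε by linarith)]
    exact aux_sqrt_exp _
  rw [h1, ← Real.exp_nat_mul, Real.exp_le_exp]
  have hl := aux_log1 hε0.le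
  have hmn : (0:ℝ) ≤ (m:ℝ) := hmpos.le
  have e3 : (0:ℝ) ≤ ε^3 := by positivity
  nlinarith [mul_le_mul_of_nonneg_left hl hmn, mul_nonneg hmn e3]

lemma aux_tail_lo (m n : ℕ) (hm : 0 < m) (ε : ℝ) (hε0 : 0 < ε) (hε1 : ε < 1)
    (u : Fin n → ℝ) (hS : 0 < ∑ j, u j ^ 2) :
    (gaussMat m n (m : NNReal)⁻¹)
        {A | ∑ i : Fin m, (∑ j, u j * A i j)^2 ≤ (1-ε) * (∑ j, u j^2)}
      ≤ ENNReal.ofReal (Real.exp ((m:ℝ)/4 * (ε^3 - ε^2))) := by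
  have hm0 : ((m:ℕ):ℝ) ≠ 0 := Nat.cast_ne_zero.2 hm.ne'
  have hmpos : (0:ℝ) < (m:ℝ) := by positivity
  have hε1' : (0:ℝ) < 1 - ε := by linarith
  set S := ∑ j, u j^2 with hSdef
  set v : NNReal := (m:NNReal)⁻¹ with hvdef
  have hv : v ≠ 0 := by
    simp only [hvdef, ne_eq, inv_eq_zero]
    exact Nat.cast_ne_zero.2 hm.ne'
  have hvr : (v:ℝ) = (m:ℝ)⁻¹ := by simp [hvdef]
  set t : ℝ := -(m*ε)/(2*(1-ε)*S) with htdef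
  have ht : t ≤ 0 := by
    rw [htdef]
    apply div_nonpos_of_nonpos_of_nonneg
    · nlinarith
    · positivity
  have hDs : 1 - 2*t*(v:ℝ)*S = (1-ε)⁻¹ := by
    rw [htdef, hvr]
    field_simp
    ring
  have hcond : 0 < 1 - 2*t*(v:ℝ)*S := by rw [hDs]; positivity
  have hmeas : Measurable fun A : Fin m → Fin n → ℝ =>
      ENNReal.ofReal (Real.exp (t * ∑ i, (∑ j, u j * A i j)^2)) := by
    apply ENNReal.measurable_ofReal.comp
    apply Real.measurable_exp.comp
    apply Measurable.const_mul
    exact Finset.measurable_sum _ fun i _ => (Finset.measurable_sum _ fun j _ =>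
      ((measurable_pi_apply j).comp (measurable_pi_apply i)).const_mul _).pow_const 2
  have hsub : {A : Fin m → Fin n → ℝ | ∑ i, (∑ j, u j * A i j)^2 ≤ (1-ε) * S}
      ⊆ {A | ENNReal.ofReal (Real.exp (t * ((1-ε)*S)))
          ≤ ENNReal.ofReal (Real.exp (t * ∑ i, (∑ j, u j * A i j)^2))} := by
    intro A hA
    simp only [Set.mem_setOf_eq] at *
    exact ENNReal.ofReal_le_ofReal (Real.exp_le_exp.2 (mul_le_mul_of_nonpos_left hA ht))
  refine (measure_mono hsub).trans ?_
  refine (meas_ge_le_lintegral_div hmeas.aemeasurable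
    (ENNReal.ofReal_pos.2 (Real.exp_pos _)).ne' ENNReal.ofReal_ne_top).trans ?_
  rw [aux_mat m n v hv u t hcond, hDs, Real.sqrt_inv, inv_inv,
    ← ENNReal.ofReal_pow (Real.sqrt_nonneg _), ← ENNReal.ofReal_div_of_pos (Real.exp_pos _)]
  apply ENNReal.ofReal_le_ofReal
  have harg : t * ((1-ε)*S) = -(m*ε)/2 := by
    rw [htdef]; field_simp
  rw [harg, div_le_iff₀ (Real.exp_pos _), ← Real.exp_add]
  have h1 : Real.sqrt (1-ε) = Real.exp (Real.log (1-ε) / 2) := by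
    conv_lhs => rw [← Real.exp_log hε1']
    exact aux_sqrt_exp _
  rw [h1, ← Real.exp_nat_mul, Real.exp_le_exp]
  have hl := aux_log2 hε0.le hε1
  have hmn : (0:ℝ) ≤ (m:ℝ) := hmpos.le
  have e3 : (0:ℝ) ≤ ε^3 := by positivity
  nlinarith [mul_le_mul_of_nonneg_left hl hmn, mul_nonneg hmn e3]

lemma aux_nearK_sq {V : Type*} [DecidableEq V] (f : V → V → ℝ) (hf : ∀ a b, 0 ≤ f a b)
    (X : Finset V) (k : ℕ) (x y : V) :
    NearK (fun a b => f a b ^ 2) X k x y ↔ NearK f X k x y := by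
  unfold NearK
  have hfil : (X.erase x).filter (fun z => f x z ^ 2 < f x y ^ 2)
      = (X.erase x).filter (fun z => f x z < f x y) := by
    apply Finset.filter_congr
    intro z _
    exact pow_lt_pow_iff_left₀ (hf x z) (hf x y) two_ne_zero
  rw [hfil]

lemma aux_iso_sq {V W : Type*} [DecidableEq V] [DecidableEq W]
    (f : V → V → ℝ) (g : W → W → ℝ) (hf : ∀ a b, 0 ≤ f a b) (hg : ∀ a b, 0 ≤ g a b)
    (X : Finset V) (k : ℕ) (ψ : V → W)
    (h : IsKNNIso (fun a b => f a b ^ 2) (fun a b => g a b ^ 2) X k ψ) :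
    IsKNNIso f g X k ψ := by
  obtain ⟨hinj, hadj⟩ := h
  refine ⟨hinj, fun x hx y hy => ?_⟩
  have h1 : KNNAdj f X k x y ↔ KNNAdj (fun a b => f a b ^ 2) X k x y := by
    unfold KNNAdj
    rw [aux_nearK_sq f hf, aux_nearK_sq f hf]
  have h2 : KNNAdj g (X.image ψ) k (ψ x) (ψ y)
      ↔ KNNAdj (fun a b => g a b ^ 2) (X.image ψ) k (ψ x) (ψ y) := by
    unfold KNNAdj
    rw [aux_nearK_sq g hg, aux_nearK_sq g hg]
  rw [h1, h2]
  exact hadj x hx y hy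


theorem stmt_2 (n m k : ℕ) (X : Finset (Fin n → ℝ)) (ε : ℝ) (hε0 : 0 < ε) (hε1 : ε < 1)
    (hgap : ∀ x ∈ X,
      kMinMax (fun a b => distE a b ^ 2) X k x ≤
        (1 - ε) / (1 + ε) * kMinMax (fun a b => distE a b ^ 2) X (k + 1) x) :
    ENNReal.ofReal
        (1 - (X.card : ℝ) * ((X.card : ℝ) - 1) * Real.exp ((m : ℝ) / 4 * (ε ^ 3 - ε ^ 2))) ≤
      gaussMat m n (m : NNReal)⁻¹
        {A | IsKNNIso distE distE X k (matVec A)} := by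
  classical
  haveI : IsProbabilityMeasure (gaussMat m n (m : NNReal)⁻¹) := by
    unfold gaussMat; infer_instance
  have hdistE_sq : ∀ {N : ℕ} (a b : Fin N → ℝ), distE a b ^ 2 = ∑ j, (a j - b j)^2 := by
    intro N a b
    rw [distE, euclNorm, Real.sq_sqrt (Finset.sum_nonneg fun j _ => sq_nonneg _)]
    simp [Pi.sub_apply]
  have hdistE_nonneg : ∀ {N : ℕ} (a b : Fin N → ℝ), 0 ≤ distE a b :=
    fun a b => Real.sqrt_nonneg _
  rcases le_or_gt X.card 1 with hX1 | hX2
  · -- trivial case |X| ≤ 1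
    have hIso : ∀ A : Fin m → Fin n → ℝ, IsKNNIso distE distE X k (matVec A) := by
      intro A
      constructor
      · intro a ha b hb _
        exact Finset.card_le_one.1 hX1 a ha b hb
      · intro x hx y hy
        have hxy : x = y := Finset.card_le_one.1 hX1 x hx y hy
        subst hxy
        constructor
        · rintro ⟨hne, _⟩; exact absurd rfl hne
        · rintro ⟨hne, _⟩; exact absurd rfl hne
    have hU : {A : Fin m → Fin n → ℝ | IsKNNIso distE distE X k (matVec A)} = Set.univ := by
      ext A; simp [hIso A]
    rw [hU, measure_univ]
    have hNN : 0 ≤ (X.card : ℝ) * ((X.card : ℝ) - 1) := by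
      rcases Nat.eq_zero_or_pos X.card with h0 | h1
      · simp [h0]
      · have : (1:ℝ) ≤ X.card := by exact_mod_cast h1
        nlinarith
    apply ENNReal.ofReal_le_one.2
    nlinarith [Real.exp_pos ((m:ℝ)/4*(ε^3-ε^2))]
  · -- |X| ≥ 2
    rcases Nat.eq_zero_or_pos m with hm0 | hm
    · subst hm0
      have h2 : (2:ℝ) ≤ X.card := by exact_mod_cast hX2
      have hneg : (1 : ℝ) - X.card * ((X.card:ℝ) - 1) * Real.exp (((0:ℕ):ℝ)/4*(ε^3-ε^2)) ≤ 0 := by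
        norm_num
        nlinarith
      rw [ENNReal.ofReal_eq_zero.2 hneg]
      exact zero_le
    · set f : (Fin n → ℝ) → (Fin n → ℝ) → ℝ := fun a b => distE a b ^ 2 with hfdef
      have hfpos : ∀ x ∈ X, ∀ y ∈ X, x ≠ y → 0 < f x y := by
        intro x _ y _ hxy
        simp only [hfdef]
        rw [hdistE_sq]
        have hex : ∃ j, x j ≠ y j := by
          by_contra hc; push_neg at hc; exact hxy (funext hc)
        obtain ⟨j, hj⟩ := hex
        apply Finset.sum_pos' (fun i _ => sq_nonneg _)
        exact ⟨j, Finset.mem_univ j,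
          lt_of_le_of_ne (sq_nonneg _) (Ne.symm (pow_ne_zero 2 (sub_ne_zero.2 hj)))⟩
      have hfsymm : ∀ x y : Fin n → ℝ, f x y = f y x := by
        intro x y; simp only [hfdef]; rw [hdistE_sq, hdistE_sq]
        exact Finset.sum_congr rfl fun j _ => by ring
      set Q : (Fin m → Fin n → ℝ) → (Fin n → ℝ) → (Fin n → ℝ) → ℝ :=
        fun A x y => ∑ i, (∑ j, (x j - y j) * A i j)^2 with hQdef
      have hQdist : ∀ (A : Fin m → Fin n → ℝ) x y,
          distE (matVec A x) (matVec A y) ^ 2 = Q A x y := by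
        intro A x y
        rw [hdistE_sq]
        apply Finset.sum_congr rfl
        intro i _
        congr 1
        show matVec A x i - matVec A y i = ∑ j, (x j - y j) * A i j
        rw [matVec, matVec, ← Finset.sum_sub_distrib]
        exact Finset.sum_congr rfl fun j _ => by ring
      have hQsymm : ∀ (A : Fin m → Fin n → ℝ) x y, Q A x y = Q A y x := by
        intro A x y; simp only [hQdef]
        apply Finset.sum_congr rfl; intro i _
        rw [show (∑ j, (x j - y j) * A i j) = -(∑ j, (y j - x j) * A i j) by
          rw [← Finset.sum_neg_distrib]; exact Finset.sum_congr rfl fun j _ => by ring]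
        rw [neg_sq]
      set Good : Set (Fin m → Fin n → ℝ) :=
        {A | ∀ x ∈ X, ∀ y ∈ X, x ≠ y → (1-ε) * f x y < Q A x y ∧ Q A x y < (1+ε) * f x y}
        with hGoodDef
      have hGoodIso : Good ⊆ {A | IsKNNIso distE distE X k (matVec A)} := by
        intro A hA
        apply aux_iso_sq distE distE hdistE_nonneg hdistE_nonneg
        apply aux_comb _ _ X k (matVec A) ε hε0 hε1 hfpos
        · intro w; simp [distE, euclNorm, sub_self]
        · intro x hx y hy hxy
          rw [hQdist A x y]
          exact hA x hx y hy hxy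
        · exact hgap
      set e : ℝ≥0∞ := ENNReal.ofReal (Real.exp ((m:ℝ)/4 * (ε^3 - ε^2))) with hedef
      set Bad : (Fin n → ℝ) × (Fin n → ℝ) → Set (Fin m → Fin n → ℝ) := fun p =>
        if WellOrderingRel p.1 p.2 then {A | (1+ε) * f p.1 p.2 ≤ Q A p.1 p.2}
        else {A | Q A p.1 p.2 ≤ (1-ε) * f p.1 p.2} with hBadDef
      have hBadBound : ∀ p ∈ X.offDiag, gaussMat m n (m:NNReal)⁻¹ (Bad p) ≤ e := by
        intro p hp
        obtain ⟨hp1, hp2, hpne⟩ := Finset.mem_offDiag.1 hp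
        have hfp := hfpos p.1 hp1 p.2 hp2 hpne
        have hfeq : f p.1 p.2 = ∑ j, (p.1 j - p.2 j)^2 := by
          simp only [hfdef]; rw [hdistE_sq]
        have hSpos : 0 < ∑ j, (p.1 j - p.2 j)^2 := by rw [← hfeq]; exact hfp
        simp only [hBadDef]
        split_ifs
        · have htail := aux_tail_up m n hm ε hε0 hε1 (fun j => p.1 j - p.2 j)
            (by simpa using hSpos)
          rw [hedef, hfeq]
          simp only [hQdef]
          simpa using htail
        · have htail := aux_tail_lo m n hm ε hε0 hε1 (fun j => p.1 j - p.2 j)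
            (by simpa using hSpos)
          rw [hedef, hfeq]
          simp only [hQdef]
          simpa using htail
      have hcover : Goodᶜ ⊆ ⋃ p ∈ X.offDiag, Bad p := by
        intro A hA
        simp only [hGoodDef, Set.mem_compl_iff, Set.mem_setOf_eq] at hA
        push_neg at hA
        obtain ⟨x, hx, y, hy, hxy, hbad⟩ := hA
        have hor : Q A x y ≤ (1-ε) * f x y ∨ (1+ε) * f x y ≤ Q A x y := by
          rcases lt_or_ge ((1-ε) * f x y) (Q A x y) with h1 | h1
          · exact Or.inr (hbad h1)
          · exact Or.inl h1
        rcases hor with hlo | hup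
        · rcases trichotomous_of WellOrderingRel x y with hr | heq | hr'
          · have hmemB : A ∈ Bad (y, x) := by
              simp only [hBadDef]
              rw [if_neg (asymm hr)]
              show Q A y x ≤ (1-ε) * f y x
              rw [← hQsymm A x y, ← hfsymm x y]
              exact hlo
            exact Set.mem_biUnion (Finset.mem_offDiag.2 ⟨hy, hx, Ne.symm hxy⟩) hmemB
          · exact absurd heq hxy
          · have hmemB : A ∈ Bad (x, y) := by
              simp only [hBadDef]
              rw [if_neg (asymm hr')]
              exact hlo
            exact Set.mem_biUnion (Finset.mem_offDiag.2 ⟨hx, hy, hxy⟩) hmemB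
        · rcases trichotomous_of WellOrderingRel x y with hr | heq | hr'
          · have hmemB : A ∈ Bad (x, y) := by
              simp only [hBadDef]
              rw [if_pos hr]
              exact hup
            exact Set.mem_biUnion (Finset.mem_offDiag.2 ⟨hx, hy, hxy⟩) hmemB
          · exact absurd heq hxy
          · have hmemB : A ∈ Bad (y, x) := by
              simp only [hBadDef]
              rw [if_pos hr']
              show (1+ε) * f y x ≤ Q A y x
              rw [← hQsymm A x y, ← hfsymm x y]
              exact hup
            exact Set.mem_biUnion (Finset.mem_offDiag.2 ⟨hy, hx, Ne.symm hxy⟩) hmemB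
      have hcompl : gaussMat m n (m:NNReal)⁻¹ Goodᶜ ≤ (X.offDiag.card : ℝ≥0∞) * e := by
        refine (measure_mono hcover).trans ?_
        refine (measure_biUnion_finset_le _ _).trans ?_
        calc ∑ p ∈ X.offDiag, gaussMat m n (m:NNReal)⁻¹ (Bad p)
            ≤ ∑ _p ∈ X.offDiag, e := Finset.sum_le_sum hBadBound
          _ = X.offDiag.card • e := Finset.sum_const e
          _ = (X.offDiag.card : ℝ≥0∞) * e := nsmul_eq_mul _ e
      have hcard : ((X.offDiag.card : ℕ) : ℝ) = (X.card : ℝ) * ((X.card : ℝ) - 1) := by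
        rw [Finset.offDiag_card]
        have hle : X.card ≤ X.card * X.card := Nat.le_mul_of_pos_left _ (by omega)
        rw [Nat.cast_sub hle]
        push_cast
        ring
      set c : ℝ := (X.card : ℝ) * ((X.card : ℝ) - 1) * Real.exp ((m:ℝ)/4 * (ε^3-ε^2)) with hcdef
      have hcnn : 0 ≤ c := by
        have h2 : (2:ℝ) ≤ X.card := by exact_mod_cast hX2
        have := Real.exp_pos ((m:ℝ)/4 * (ε^3-ε^2))
        rw [hcdef]
        nlinarith
      have hprod : (X.offDiag.card : ℝ≥0∞) * e = ENNReal.ofReal c := by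
        rw [hedef, hcdef, ← hcard, ← ENNReal.ofReal_natCast (X.offDiag.card),
          ← ENNReal.ofReal_mul (Nat.cast_nonneg _)]
      rcases le_or_gt c 1 with hc1 | hc1
      · calc ENNReal.ofReal (1 - c)
            ≤ 1 - ENNReal.ofReal c := by
              apply ENNReal.le_sub_of_add_le_right ENNReal.ofReal_ne_top
              rw [← ENNReal.ofReal_add (by linarith) hcnn,
                show (1 - c) + c = 1 by ring]
              exact le_of_eq ENNReal.ofReal_one
          _ ≤ 1 - gaussMat m n (m:NNReal)⁻¹ Goodᶜ :=
              tsub_le_tsub_left (hprod ▸ hcompl) 1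
          _ ≤ gaussMat m n (m:NNReal)⁻¹ Good := by
              rw [tsub_le_iff_right, ← measure_univ (μ := gaussMat m n (m:NNReal)⁻¹),
                ← Set.union_compl_self Good]
              exact measure_union_le _ _
          _ ≤ gaussMat m n (m:NNReal)⁻¹ {A | IsKNNIso distE distE X k (matVec A)} :=
              measure_mono hGoodIso
      · rw [ENNReal.ofReal_eq_zero.2 (by linarith)]
        exact zero_le
end

section
/- Let X ⊂ ℝⁿ be a finite set, let r > 0, and for x ∈ X let N(x) denote its one-hop neighborhood in the r-neighborhood graph G_r(X). Choose 0 < ε < 1 such that for every x ∈ X, ε < min{ (r² − max_{y∈N(x)} ‖x−y‖²) / max_{y∈N(x)} ‖x−y‖², (min_{y∉N(x)} ‖x−y‖² − r²) / min_{y∉N(x)} ‖x−y‖² }. Let A ∈ ℝ^{m×n} be a random matrix with i.i.d. entries A_{ij} ~ N(0, 1/m). Then the map ψ: x ↦ Ax is a graph isomorphism between G_r(X) and G_r(AX), where AX = {Ax : x ∈ X}, with probability at least 1 − |X|(|X|−1)·exp((m/4)(ε³ − ε²)). -/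
open MeasureTheory ProbabilityTheory

/-- Adjacency in the `r`-neighborhood graph `G_r(X)` (w.r.t. the distance `d`):
distinct points of `X` at distance `< r`. -/
def RAdj {V : Type*} (d : V → V → ℝ) (X : Finset V) (r : ℝ) (x y : V) : Prop :=
  x ≠ y ∧ x ∈ X ∧ y ∈ X ∧ d x y < r

/-- `max_{y ∈ N(x)} g x y`, where `N(x)` is the one-hop neighborhood of `x` in `G_r(X)`. -/
noncomputable def maxNbrVal {V : Type*} (d : V → V → ℝ) (X : Finset V) (r : ℝ)
    (g : V → V → ℝ) (x : V) : ℝ :=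
  sSup {s : ℝ | ∃ y, RAdj d X r x y ∧ s = g x y}

/-- `min_{y ∈ X, y ∉ N(x), y ≠ x} g x y`, where `N(x)` is the one-hop neighborhood of `x`
in `G_r(X)`. -/
noncomputable def minNonNbrVal {V : Type*} (d : V → V → ℝ) (X : Finset V) (r : ℝ)
    (g : V → V → ℝ) (x : V) : ℝ :=
  sInf {s : ℝ | ∃ y ∈ X, y ≠ x ∧ ¬ RAdj d X r x y ∧ s = g x y}

/-- `ψ` is a graph isomorphism between `G_r(X)` and `G_r(ψ(X))`: it is a bijection of `X`
onto its image preserving and reflecting `r`-neighborhood adjacency. -/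
def IsRIso {V W : Type*} [DecidableEq W] (dV : V → V → ℝ) (dW : W → W → ℝ)
    (X : Finset V) (r : ℝ) (ψ : V → W) : Prop :=
  Set.InjOn ψ X ∧
    ∀ x ∈ X, ∀ y ∈ X, (RAdj dV X r x y ↔ RAdj dW (X.image ψ) r (ψ x) (ψ y))

open scoped NNReal ENNReal
open Real


lemma integrable_exp_quad {b : ℝ} (hb : 0 < b) (c : ℝ) :
    Integrable (fun x : ℝ => Real.exp (-b * x ^ 2 + c * x)) := by
  have h : ∀ x : ℝ, -b * x ^ 2 + c * x
      = c ^ 2 / (4 * b) + (-b * (x - c / (2 * b)) ^ 2) := by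
    intro x; field_simp; ring
  simp only [h, Real.exp_add]
  exact (((integrable_exp_neg_mul_sq hb).comp_sub_right (c / (2 * b))).const_mul _)

lemma integral_exp_quad {b : ℝ} (hb : 0 < b) (c : ℝ) :
    ∫ x : ℝ, Real.exp (-b * x ^ 2 + c * x)
      = Real.sqrt (π / b) * Real.exp (c ^ 2 / (4 * b)) := by
  have h : ∀ x : ℝ, -b * x ^ 2 + c * x
      = c ^ 2 / (4 * b) + (-b * (x - c / (2 * b)) ^ 2) := by
    intro x; field_simp; ring
  simp only [h, Real.exp_add]
  rw [MeasureTheory.integral_const_mul]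
  rw [show (fun x : ℝ => Real.exp (-b * (x - c / (2*b)) ^ 2)) = fun x : ℝ =>
    (fun y : ℝ => Real.exp (-b * y ^ 2)) (x - c / (2*b)) from rfl]
  rw [MeasureTheory.integral_sub_right_eq_self (fun y : ℝ => Real.exp (-b * y ^ 2)) (c / (2*b))]
  rw [integral_gaussian]; ring

lemma integral_gaussianReal_eq {v : NNReal} (hv : v ≠ 0) (g : ℝ → ℝ) :
    ∫ x, g x ∂(gaussianReal 0 v)
      = ∫ x, gaussianPDFReal 0 v x * g x := by
  rw [gaussianReal_of_var_ne_zero 0 hv, gaussianPDF_def]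
  have h1 : ∀ x : ℝ, ENNReal.ofReal (gaussianPDFReal 0 v x)
      = ((Real.toNNReal (gaussianPDFReal 0 v x) : ℝ≥0) : ℝ≥0∞) := fun x => rfl
  simp_rw [h1]
  rw [integral_withDensity_eq_integral_smul
    ((measurable_gaussianPDFReal 0 v).real_toNNReal) g]
  congr 1; funext x
  rw [NNReal.smul_def, smul_eq_mul, Real.coe_toNNReal _ (gaussianPDFReal_nonneg 0 v x)]

lemma integrable_gaussianReal_iff {v : NNReal} (hv : v ≠ 0) {g : ℝ → ℝ}
    (hg : Measurable g) :
    Integrable g (gaussianReal 0 v) ↔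
      Integrable (fun x => g x * gaussianPDFReal 0 v x) := by
  rw [gaussianReal_of_var_ne_zero 0 hv, gaussianPDF_def,
    integrable_withDensity_iff ((measurable_gaussianPDFReal 0 v).ennreal_ofReal)
      (Filter.Eventually.of_forall fun x => ENNReal.ofReal_lt_top)]
  refine integrable_congr (Filter.Eventually.of_forall fun x => ?_)
  simp only [ENNReal.toReal_ofReal (gaussianPDFReal_nonneg 0 v x)]

lemma gauss_quad_one_dim {v : NNReal} (hv : 0 < (v : ℝ)) (s a c : ℝ)
    (h : 2 * s * (v : ℝ) * c ^ 2 < 1) :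
    Integrable (fun x : ℝ => Real.exp (s * (a + c * x) ^ 2)) (gaussianReal 0 v) ∧
    ∫ x, Real.exp (s * (a + c * x) ^ 2) ∂(gaussianReal 0 v)
      = Real.exp (s * a ^ 2 / (1 - 2 * s * (v : ℝ) * c ^ 2))
        / Real.sqrt (1 - 2 * s * (v : ℝ) * c ^ 2) := by
  have hv0 : v ≠ 0 := by
    intro hv0; rw [hv0] at hv; simp at hv
  set V := (v : ℝ) with hV
  set D := 1 - 2 * s * V * c ^ 2 with hD
  have hD0 : 0 < D := by rw [hD]; linarith
  set b := D / (2 * V) with hb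
  have hb0 : 0 < b := by positivity
  set cc := 2 * s * a * c with hcc
  have hpdf : ∀ x : ℝ, gaussianPDFReal 0 v x
      = (Real.sqrt (2 * π * V))⁻¹ * Real.exp (-(x ^ 2) / (2 * V)) := by
    intro x
    rw [gaussianPDFReal]
    simp only [sub_zero]
    rfl
  have hexp2 : ∀ x : ℝ, s * (a + c * x) ^ 2 + -(x ^ 2) / (2 * V)
      = s * a ^ 2 + (-b * x ^ 2 + cc * x) := by
    intro x; rw [hb, hD, hcc]; field_simp; ring
  have hpoint : ∀ x : ℝ, Real.exp (s * (a + c * x) ^ 2) * gaussianPDFReal 0 v x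
      = (Real.sqrt (2 * π * V))⁻¹ * Real.exp (s * a ^ 2)
          * Real.exp (-b * x ^ 2 + cc * x) := by
    intro x
    rw [hpdf x]
    calc Real.exp (s * (a + c * x) ^ 2)
          * ((Real.sqrt (2 * π * V))⁻¹ * Real.exp (-(x ^ 2) / (2 * V)))
        = (Real.sqrt (2 * π * V))⁻¹
            * Real.exp (s * (a + c * x) ^ 2 + -(x ^ 2) / (2 * V)) := by
          rw [Real.exp_add]; ring
      _ = (Real.sqrt (2 * π * V))⁻¹
            * Real.exp (s * a ^ 2 + (-b * x ^ 2 + cc * x)) := by rw [hexp2 x]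
      _ = _ := by rw [Real.exp_add]; ring
  constructor
  · rw [integrable_gaussianReal_iff hv0 (by fun_prop)]
    refine Integrable.congr (((integrable_exp_quad hb0 cc).const_mul
      ((Real.sqrt (2 * π * V))⁻¹ * Real.exp (s * a ^ 2)))) ?_
    exact Filter.Eventually.of_forall fun x => (hpoint x).symm
  · rw [integral_gaussianReal_eq hv0]
    simp_rw [mul_comm (gaussianPDFReal 0 v _) _, hpoint]
    rw [MeasureTheory.integral_const_mul, integral_exp_quad hb0 cc]
    have hsqrt : (Real.sqrt (2 * π * V))⁻¹ * Real.sqrt (π / b) = (Real.sqrt D)⁻¹ := by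
      have h2 : π / b = (2 * π * V) / D := by rw [hb]; field_simp
      rw [h2, Real.sqrt_div (by positivity) D]
      rw [div_eq_mul_inv, ← mul_assoc, inv_mul_cancel₀ (by positivity), one_mul]
    have hexp : Real.exp (s * a ^ 2) * Real.exp (cc ^ 2 / (4 * b))
        = Real.exp (s * a ^ 2 / D) := by
      rw [← Real.exp_add]
      congr 1
      rw [hcc, hb]
      have hD1 : D ≠ 0 := hD0.ne'
      field_simp
      rw [hD]
      ring
    calc (Real.sqrt (2 * π * V))⁻¹ * Real.exp (s * a ^ 2)
        * (Real.sqrt (π / b) * Real.exp (cc ^ 2 / (4 * b)))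
        = ((Real.sqrt (2 * π * V))⁻¹ * Real.sqrt (π / b))
          * (Real.exp (s * a ^ 2) * Real.exp (cc ^ 2 / (4 * b))) := by ring
      _ = (Real.sqrt D)⁻¹ * Real.exp (s * a ^ 2 / D) := by rw [hsqrt, hexp]
      _ = Real.exp (s * a ^ 2 / D) / Real.sqrt D := by rw [div_eq_mul_inv]; ring

lemma gauss_quad_multi {v : NNReal} (hv : 0 < (v : ℝ)) :
    ∀ (k : ℕ) (c : Fin k → ℝ) (s a : ℝ),
      2 * s * (v : ℝ) * (∑ j, c j ^ 2) < 1 →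
    Integrable (fun x : Fin k → ℝ => Real.exp (s * (a + ∑ j, c j * x j) ^ 2))
        (Measure.pi fun _ => gaussianReal 0 v) ∧
    ∫ x : Fin k → ℝ, Real.exp (s * (a + ∑ j, c j * x j) ^ 2)
        ∂(Measure.pi fun _ => gaussianReal 0 v)
      = Real.exp (s * a ^ 2 / (1 - 2 * s * (v : ℝ) * (∑ j, c j ^ 2)))
        / Real.sqrt (1 - 2 * s * (v : ℝ) * (∑ j, c j ^ 2)) := by
  intro k
  induction k with
  | zero =>
      intro c s a _
      simp only [Finset.univ_eq_empty, Finset.sum_empty, add_zero, mul_zero, sub_zero,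
        Real.sqrt_one, div_one]
      constructor
      · exact integrable_const _
      · simp [measure_univ]
  | succ k IH =>
      intro c s a hcond
      set V := (v : ℝ) with hV
      set Wt := ∑ j : Fin k, c j.succ ^ 2 with hWt
      have hsum : ∑ j : Fin (k+1), c j ^ 2 = c 0 ^ 2 + Wt := by
        rw [Fin.sum_univ_succ]
      have hWt0 : 0 ≤ Wt := Finset.sum_nonneg fun j _ => sq_nonneg _
      have hc00 : 0 ≤ c 0 ^ 2 := sq_nonneg _
      have hcond' : 2 * s * V * (c 0 ^ 2 + Wt) < 1 := by rwa [hsum] at hcond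
      have hDt0 : 0 < 1 - 2 * s * V * Wt := by
        rcases le_or_gt 0 s with hs | hs
        · have h0 : 0 ≤ 2 * s * V * c 0 ^ 2 := by positivity
          nlinarith
        · have h0 : 2 * s * V * Wt ≤ 0 :=
            mul_nonpos_of_nonpos_of_nonneg (by nlinarith) hWt0
          linarith
      set Dt := 1 - 2 * s * V * Wt with hDt
      have hc0cond : 2 * s * V * c 0 ^ 2 < Dt := by rw [hDt]; nlinarith
      set s' := s / Dt with hs'
      have hs'cond : 2 * s' * V * c 0 ^ 2 < 1 := by
        rw [hs']
        rw [show 2 * (s / Dt) * V * c 0 ^ 2 = (2 * s * V * c 0 ^ 2) / Dt by ring]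
        rw [div_lt_one hDt0]
        exact hc0cond
      have hD0 : 0 < 1 - 2 * s' * V * c 0 ^ 2 := by linarith
      set D := 1 - 2 * s * V * (∑ j : Fin (k+1), c j ^ 2) with hD
      have hDpos : 0 < D := by rw [hD]; linarith
      have hDsplit : 1 - 2 * s' * V * c 0 ^ 2 = D / Dt := by
        rw [hs', hD, hsum]; field_simp; ring
      -- the equivalence
      set e := MeasurableEquiv.piFinSuccAbove (fun _ : Fin (k+1) => ℝ) 0 with he
      have hpres := measurePreserving_piFinSuccAbove
        (fun _ : Fin (k+1) => gaussianReal 0 v) 0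
      set G : ℝ × (Fin k → ℝ) → ℝ := fun p =>
        Real.exp (s * ((a + c 0 * p.1) + ∑ j : Fin k, c j.succ * p.2 j) ^ 2) with hG
      have hFG : ∀ x : Fin (k+1) → ℝ,
          Real.exp (s * (a + ∑ j, c j * x j) ^ 2) = G (e x) := by
        intro x
        have h1 : (e x).1 = x 0 := rfl
        have h2 : ∀ j : Fin k, (e x).2 j = x j.succ := fun j => by
          show x ((0 : Fin (k+1)).succAbove j) = x j.succ
          rw [Fin.zero_succAbove]
        rw [hG]
        simp only [h1, h2]
        rw [Fin.sum_univ_succ]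
        congr 1
        ring
      have hGm : Measurable G := by
        apply Measurable.comp Real.measurable_exp
        apply Measurable.const_mul
        apply Measurable.pow_const
        apply Measurable.add
        · exact measurable_const.add (measurable_fst.const_mul _)
        · exact Finset.measurable_sum _ fun j _ =>
            ((measurable_pi_apply j).comp measurable_snd).const_mul _
      -- slices
      have hslice := fun x : ℝ => IH (fun j => c j.succ) s (a + c 0 * x)
        (by rw [← hWt]; rcases le_or_gt 0 s with hs | hs
            · nlinarith
            · nlinarith)
      have hnormint : ∀ x : ℝ, (∫ y : Fin k → ℝ, ‖G (x, y)‖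
            ∂(Measure.pi fun _ => gaussianReal 0 v))
          = Real.exp (s' * (a + c 0 * x) ^ 2) / Real.sqrt Dt := by
        intro x
        have h1 : ∀ y : Fin k → ℝ, ‖G (x, y)‖ = G (x, y) := fun y =>
          Real.norm_of_nonneg (Real.exp_pos _).le
        simp_rw [h1, hG]
        rw [(hslice x).2]
        congr 2
        rw [hs']; ring
      have hGint : Integrable G ((gaussianReal 0 v).prod
          (Measure.pi fun _ : Fin k => gaussianReal 0 v)) := by
        rw [integrable_prod_iff hGm.aestronglyMeasurable]
        constructor
        · exact Filter.Eventually.of_forall fun x => (hslice x).1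
        · refine Integrable.congr (((gauss_quad_one_dim hv s' a (c 0) hs'cond).1.div_const
            (Real.sqrt Dt))) ?_
          exact Filter.Eventually.of_forall fun x => (hnormint x).symm
      have hcomp : Integrable
          (fun x : Fin (k+1) → ℝ => Real.exp (s * (a + ∑ j, c j * x j) ^ 2))
          (Measure.pi fun _ => gaussianReal 0 v) := by
        have : (fun x : Fin (k+1) → ℝ => Real.exp (s * (a + ∑ j, c j * x j) ^ 2))
            = G ∘ e := by funext x; exact hFG x
        rw [this]
        exact (hpres.integrable_comp_emb e.measurableEmbedding).2 hGint
      refine ⟨hcomp, ?_⟩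
      have hint1 : ∫ x : Fin (k+1) → ℝ, Real.exp (s * (a + ∑ j, c j * x j) ^ 2)
            ∂(Measure.pi fun _ => gaussianReal 0 v)
          = ∫ p, G p ∂((gaussianReal 0 v).prod
              (Measure.pi fun _ : Fin k => gaussianReal 0 v)) := by
        rw [show (fun x : Fin (k+1) → ℝ => Real.exp (s * (a + ∑ j, c j * x j) ^ 2))
          = fun x => G (e x) from funext hFG]
        exact hpres.integral_comp e.measurableEmbedding G
      rw [hint1, MeasureTheory.integral_prod G hGint]
      have hinner : ∀ x : ℝ, (∫ y : Fin k → ℝ, G (x, y)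
            ∂(Measure.pi fun _ => gaussianReal 0 v))
          = Real.exp (s' * (a + c 0 * x) ^ 2) / Real.sqrt Dt := by
        intro x
        rw [← hnormint x]
        congr 1
        funext y
        rw [Real.norm_of_nonneg (Real.exp_pos _).le]
      simp_rw [hinner]
      rw [MeasureTheory.integral_div, (gauss_quad_one_dim hv s' a (c 0) hs'cond).2]
      rw [hDsplit]
      have h1 : s' * a ^ 2 / (D / Dt) = s * a ^ 2 / D := by
        rw [hs']; field_simp
      rw [h1, Real.sqrt_div hDpos.le]
      rw [div_div, div_mul_cancel₀ _ (ne_of_gt (Real.sqrt_pos.2 hDt0))]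

lemma pi_prod_pow {E : Type*} [MeasurableSpace E] (ν : Measure E) [IsProbabilityMeasure ν]
    {m : ℕ} (f : E → ℝ) (hf : Integrable f ν) :
    Integrable (fun x : Fin m → E => ∏ i, f (x i)) (Measure.pi fun _ => ν) ∧
    ∫ x : Fin m → E, ∏ i, f (x i) ∂(Measure.pi fun _ => ν) = (∫ x, f x ∂ν) ^ m := by
  letI : MeasureSpace E := ⟨ν⟩
  constructor
  · exact Integrable.fintype_prod (f := fun _ : Fin m => f) (fun _ => hf)
  · have := MeasureTheory.integral_fintype_prod_eq_pow (𝕜 := ℝ) (ι := Fin m) f (μ := ν)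
    simpa using this

lemma exp_neg_le (ε : ℝ) (h0 : 0 ≤ ε) (h1 : ε ≤ 1) :
    Real.exp (-ε) ≤ 1 - ε + ε^2/2 - ε^3/6 + (5/96)*ε^4 := by
  have hb := Real.exp_bound (x := -ε) (by rw [abs_neg, abs_of_nonneg h0]; exact h1)
    (n := 4) (by norm_num)
  rw [abs_neg, abs_of_nonneg h0] at hb
  norm_num [Finset.sum_range_succ, Nat.factorial] at hb
  have h2 := (abs_le.1 hb).2
  linarith

lemma exp_pos_le (ε : ℝ) (h0 : 0 ≤ ε) (h1 : ε ≤ 1) :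
    Real.exp ε ≤ 1 + ε + ε^2/2 + ε^3/6 + (5/96)*ε^4 := by
  have hb := Real.exp_bound (x := ε) (by rwa [abs_of_nonneg h0]) (n := 4) (by norm_num)
  rw [abs_of_nonneg h0] at hb
  norm_num [Finset.sum_range_succ, Nat.factorial] at hb
  have h2 := (abs_le.1 hb).2
  linarith

lemma numeric_up (ε : ℝ) (h0 : 0 ≤ ε) (h1 : ε ≤ 1) :
    Real.sqrt (1+ε) * Real.exp (-ε/2) ≤ Real.exp ((ε^3 - ε^2)/4) := by
  have hL0 : 0 ≤ Real.sqrt (1+ε) * Real.exp (-ε/2) := by positivity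
  have h5 : ε^5 ≤ ε^4 := pow_le_pow_of_le_one h0 h1 (by norm_num)
  have hsq : (Real.sqrt (1+ε) * Real.exp (-ε/2))^2 = (1+ε) * Real.exp (-ε) := by
    rw [mul_pow, Real.sq_sqrt (by linarith), sq, ← Real.exp_add,
      show -ε/2 + -ε/2 = -ε by ring]
  have hexp := exp_neg_le ε h0 h1
  have hkey : (1+ε) * Real.exp (-ε) ≤ 1 + (ε^3 - ε^2)/2 := by
    have hmul : (1+ε) * Real.exp (-ε) ≤ (1+ε) * (1 - ε + ε^2/2 - ε^3/6 + (5/96)*ε^4) :=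
      mul_le_mul_of_nonneg_left hexp (by linarith)
    nlinarith
  have hkey2 : (1 : ℝ) + (ε^3 - ε^2)/2 ≤ Real.exp ((ε^3-ε^2)/2) := by
    have := Real.add_one_le_exp ((ε^3-ε^2)/2); linarith
  have h2 : (Real.sqrt (1+ε) * Real.exp (-ε/2))^2 ≤ (Real.exp ((ε^3-ε^2)/4))^2 := by
    rw [hsq, sq, ← Real.exp_add, show (ε^3-ε^2)/4 + (ε^3-ε^2)/4 = (ε^3-ε^2)/2 by ring]
    linarith
  calc Real.sqrt (1+ε) * Real.exp (-ε/2)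
      = Real.sqrt ((Real.sqrt (1+ε) * Real.exp (-ε/2))^2) := (Real.sqrt_sq hL0).symm
    _ ≤ Real.sqrt ((Real.exp ((ε^3-ε^2)/4))^2) := Real.sqrt_le_sqrt h2
    _ = Real.exp ((ε^3-ε^2)/4) := Real.sqrt_sq (Real.exp_pos _).le

lemma numeric_down (ε : ℝ) (h0 : 0 ≤ ε) (h1 : ε ≤ 1) :
    Real.sqrt (1-ε) * Real.exp (ε/2) ≤ Real.exp ((ε^3 - ε^2)/4) := by
  have hL0 : 0 ≤ Real.sqrt (1-ε) * Real.exp (ε/2) := by positivity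
  have h5 : ε^5 ≤ ε^4 := pow_le_pow_of_le_one h0 h1 (by norm_num)
  have hsq : (Real.sqrt (1-ε) * Real.exp (ε/2))^2 = (1-ε) * Real.exp ε := by
    rw [mul_pow, Real.sq_sqrt (by linarith), sq, ← Real.exp_add,
      show ε/2 + ε/2 = ε by ring]
  have hexp := exp_pos_le ε h0 h1
  have hkey : (1-ε) * Real.exp ε ≤ 1 + (ε^3 - ε^2)/2 := by
    have hmul : (1-ε) * Real.exp ε ≤ (1-ε) * (1 + ε + ε^2/2 + ε^3/6 + (5/96)*ε^4) :=
      mul_le_mul_of_nonneg_left hexp (by linarith)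
    nlinarith [pow_nonneg h0 3, pow_nonneg h0 4, pow_nonneg h0 5]
  have hkey2 : (1 : ℝ) + (ε^3 - ε^2)/2 ≤ Real.exp ((ε^3-ε^2)/2) := by
    have := Real.add_one_le_exp ((ε^3-ε^2)/2); linarith
  have h2 : (Real.sqrt (1-ε) * Real.exp (ε/2))^2 ≤ (Real.exp ((ε^3-ε^2)/4))^2 := by
    rw [hsq, sq, ← Real.exp_add, show (ε^3-ε^2)/4 + (ε^3-ε^2)/4 = (ε^3-ε^2)/2 by ring]
    linarith
  calc Real.sqrt (1-ε) * Real.exp (ε/2)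
      = Real.sqrt ((Real.sqrt (1-ε) * Real.exp (ε/2))^2) := (Real.sqrt_sq hL0).symm
    _ ≤ Real.sqrt ((Real.exp ((ε^3-ε^2)/4))^2) := Real.sqrt_le_sqrt h2
    _ = Real.exp ((ε^3-ε^2)/4) := Real.sqrt_sq (Real.exp_pos _).le

section
variable {m n : ℕ}

lemma mgf_Z {v : NNReal} (hv : 0 < (v : ℝ)) (u : Fin n → ℝ) (t : ℝ)
    (ht : 2 * t * (v : ℝ) * (∑ j, u j ^ 2) < 1) :
    Integrable (fun A : Fin m → Fin n → ℝ =>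
        Real.exp (t * ∑ i, (∑ j, A i j * u j) ^ 2)) (gaussMat m n v) ∧
    ∫ A : Fin m → Fin n → ℝ, Real.exp (t * ∑ i, (∑ j, A i j * u j) ^ 2)
        ∂(gaussMat m n v)
      = ((Real.sqrt (1 - 2 * t * (v : ℝ) * (∑ j, u j ^ 2)))⁻¹) ^ m := by
  classical
  set ν : Measure (Fin n → ℝ) := Measure.pi fun _ => gaussianReal 0 v with hν
  haveI : IsProbabilityMeasure ν := by rw [hν]; infer_instance
  set f : (Fin n → ℝ) → ℝ := fun w => Real.exp (t * (0 + ∑ j, u j * w j) ^ 2) with hf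
  have hfint : Integrable f ν := (gauss_quad_multi hv n u t 0 ht).1
  have hpoint : ∀ A : Fin m → Fin n → ℝ,
      Real.exp (t * ∑ i, (∑ j, A i j * u j) ^ 2) = ∏ i, f (A i) := by
    intro A
    have h3 : ∀ i : Fin m, (0 : ℝ) + ∑ j, u j * A i j = ∑ j, A i j * u j := by
      intro i
      rw [zero_add]
      exact Finset.sum_congr rfl fun j _ => mul_comm _ _
    rw [hf]
    simp only [h3]
    rw [Finset.mul_sum, Real.exp_sum]
  have hmain := pi_prod_pow ν f hfint (m := m)
  constructor
  · refine (hmain.1.congr ?_)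
    exact Filter.Eventually.of_forall fun A => (hpoint A).symm
  · have h2 : ∫ A : Fin m → Fin n → ℝ, Real.exp (t * ∑ i, (∑ j, A i j * u j) ^ 2)
        ∂(gaussMat m n v) = ∫ x : Fin m → (Fin n → ℝ), ∏ i, f (x i) ∂(Measure.pi fun _ => ν) := by
      rw [gaussMat, ← hν]
      exact integral_congr_ae (Filter.Eventually.of_forall fun A => hpoint A)
    rw [h2, hmain.2, (gauss_quad_multi hv n u t 0 ht).2]
    congr 1
    rw [zero_pow (by norm_num), mul_zero, zero_div, Real.exp_zero]
    rw [one_div]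

lemma tail_up {v : NNReal} (hv : 0 < (v : ℝ)) (hvm : (v : ℝ) = (m : ℝ)⁻¹) (hm : 0 < m)
    (u : Fin n → ℝ) (hu : 0 < ∑ j, u j ^ 2) (ε : ℝ) (hε0 : 0 < ε) (hε1 : ε < 1) :
    gaussMat m n v {A | (1 + ε) * (∑ j, u j ^ 2) ≤ ∑ i, (∑ j, A i j * u j) ^ 2}
      ≤ ENNReal.ofReal (Real.exp ((m : ℝ) / 4 * (ε ^ 3 - ε ^ 2))) := by
  classical
  set W := ∑ j, u j ^ 2 with hW
  set t := (m : ℝ) * ε / (2 * W * (1 + ε)) with htdef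
  have hm' : (0 : ℝ) < m := Nat.cast_pos.2 hm
  have ht0 : 0 ≤ t := by positivity
  have htv : 2 * t * (v : ℝ) * W = ε / (1 + ε) := by
    rw [htdef, hvm]; field_simp
  have htcond : 2 * t * (v : ℝ) * W < 1 := by
    rw [htv, div_lt_one (by linarith)]; linarith
  have hmgf := mgf_Z (m := m) hv u t htcond
  haveI : IsProbabilityMeasure (gaussMat m n v) := by rw [gaussMat]; infer_instance
  have hchern := ProbabilityTheory.measure_ge_le_exp_mul_mgf
    (μ := gaussMat m n v) (X := fun A => ∑ i, (∑ j, A i j * u j) ^ 2)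
    ((1 + ε) * W) ht0 hmgf.1
  have hD : 1 - 2 * t * (v : ℝ) * W = (1 + ε)⁻¹ := by
    rw [htv]; field_simp; ring
  have hmgfval : mgf (fun A => ∑ i, (∑ j, A i j * u j) ^ 2) (gaussMat m n v) t
      = (Real.sqrt (1 + ε)) ^ m := by
    rw [mgf]
    rw [hmgf.2, hD, Real.sqrt_inv, inv_inv]
  have hexp : Real.exp (-t * ((1 + ε) * W)) = (Real.exp (-ε/2)) ^ m := by
    rw [← Real.exp_nat_mul]
    congr 1
    rw [htdef]
    field_simp
  have hb : (gaussMat m n v {A | (1 + ε) * W ≤ ∑ i, (∑ j, A i j * u j) ^ 2}).toReal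
      ≤ Real.exp ((m : ℝ) / 4 * (ε ^ 3 - ε ^ 2)) := by
    refine hchern.trans ?_
    rw [hmgfval, hexp]
    calc Real.exp (-ε/2) ^ m * Real.sqrt (1 + ε) ^ m
        = (Real.sqrt (1 + ε) * Real.exp (-ε/2)) ^ m := by rw [← mul_pow]; ring_nf
      _ ≤ (Real.exp ((ε^3 - ε^2)/4)) ^ m := by
          refine pow_le_pow_left₀ (by positivity) (numeric_up ε hε0.le hε1.le) m
      _ = Real.exp ((m : ℝ) / 4 * (ε ^ 3 - ε ^ 2)) := by
          rw [← Real.exp_nat_mul]; congr 1; ring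
  have hne : gaussMat m n v {A | (1 + ε) * W ≤ ∑ i, (∑ j, A i j * u j) ^ 2} ≠ ⊤ :=
    measure_ne_top _ _
  rw [← ENNReal.ofReal_toReal hne]
  exact ENNReal.ofReal_le_ofReal hb

lemma tail_down {v : NNReal} (hv : 0 < (v : ℝ)) (hvm : (v : ℝ) = (m : ℝ)⁻¹) (hm : 0 < m)
    (u : Fin n → ℝ) (hu : 0 < ∑ j, u j ^ 2) (ε : ℝ) (hε0 : 0 < ε) (hε1 : ε < 1) :
    gaussMat m n v {A | ∑ i, (∑ j, A i j * u j) ^ 2 ≤ (1 - ε) * (∑ j, u j ^ 2)}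
      ≤ ENNReal.ofReal (Real.exp ((m : ℝ) / 4 * (ε ^ 3 - ε ^ 2))) := by
  classical
  set W := ∑ j, u j ^ 2 with hW
  set t := -((m : ℝ) * ε / (2 * W * (1 - ε))) with htdef
  have hm' : (0 : ℝ) < m := Nat.cast_pos.2 hm
  have h1me : (1 : ℝ) - ε ≠ 0 := by nlinarith
  have hW0 : W ≠ 0 := ne_of_gt hu
  have hm0 : (m : ℝ) ≠ 0 := ne_of_gt hm'
  have ht0 : t ≤ 0 := by
    rw [htdef, neg_nonpos]
    exact div_nonneg (by positivity) (by nlinarith)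
  have htv : 2 * t * (v : ℝ) * W = -(ε / (1 - ε)) := by
    rw [htdef, hvm]; field_simp
  have htcond : 2 * t * (v : ℝ) * W < 1 := by
    rw [htv]
    have : 0 < ε / (1 - ε) := div_pos hε0 (by linarith)
    linarith
  have hmgf := mgf_Z (m := m) hv u t htcond
  haveI : IsProbabilityMeasure (gaussMat m n v) := by rw [gaussMat]; infer_instance
  have hchern := ProbabilityTheory.measure_le_le_exp_mul_mgf
    (μ := gaussMat m n v) (X := fun A => ∑ i, (∑ j, A i j * u j) ^ 2)
    ((1 - ε) * W) ht0 hmgf.1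
  have hD : 1 - 2 * t * (v : ℝ) * W = (1 - ε)⁻¹ := by
    rw [htv, sub_neg_eq_add]
    rw [eq_comm, inv_eq_iff_eq_inv, eq_comm, inv_eq_one_div]
    field_simp
    ring
  have hmgfval : mgf (fun A => ∑ i, (∑ j, A i j * u j) ^ 2) (gaussMat m n v) t
      = (Real.sqrt (1 - ε)) ^ m := by
    rw [mgf]
    rw [hmgf.2, hD, Real.sqrt_inv, inv_inv]
  have hexp : Real.exp (-t * ((1 - ε) * W)) = (Real.exp (ε/2)) ^ m := by
    rw [← Real.exp_nat_mul]
    congr 1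
    rw [htdef, neg_neg]
    rw [div_mul_eq_mul_div, div_eq_iff (mul_ne_zero (mul_ne_zero two_ne_zero hW0) h1me)]
    ring
  have hb : (gaussMat m n v {A | ∑ i, (∑ j, A i j * u j) ^ 2 ≤ (1 - ε) * W}).toReal
      ≤ Real.exp ((m : ℝ) / 4 * (ε ^ 3 - ε ^ 2)) := by
    refine hchern.trans ?_
    rw [hmgfval, hexp]
    calc Real.exp (ε/2) ^ m * Real.sqrt (1 - ε) ^ m
        = (Real.sqrt (1 - ε) * Real.exp (ε/2)) ^ m := by rw [← mul_pow]; ring_nf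
      _ ≤ (Real.exp ((ε^3 - ε^2)/4)) ^ m := by
          refine pow_le_pow_left₀ (by positivity) (numeric_down ε hε0.le hε1.le) m
      _ = Real.exp ((m : ℝ) / 4 * (ε ^ 3 - ε ^ 2)) := by
          rw [← Real.exp_nat_mul]; congr 1; ring
  have hne : gaussMat m n v {A | ∑ i, (∑ j, A i j * u j) ^ 2 ≤ (1 - ε) * W} ≠ ⊤ :=
    measure_ne_top _ _
  rw [← ENNReal.ofReal_toReal hne]
  exact ENNReal.ofReal_le_ofReal hb

end

-- helper facts
section helpers
variable {n m : ℕ}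

lemma distE_nonneg (a b : Fin n → ℝ) : 0 ≤ distE a b := Real.sqrt_nonneg _

lemma distE_sq (a b : Fin n → ℝ) : distE a b ^ 2 = ∑ j, (a j - b j) ^ 2 := by
  rw [distE, euclNorm, Real.sq_sqrt (Finset.sum_nonneg fun j _ => sq_nonneg _)]
  rfl

lemma distE_sq_pos {a b : Fin n → ℝ} (h : a ≠ b) : 0 < distE a b ^ 2 := by
  rw [distE_sq]
  obtain ⟨j, hj⟩ := Function.ne_iff.1 h
  refine Finset.sum_pos' (fun i _ => sq_nonneg _) ⟨j, Finset.mem_univ j, ?_⟩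
  exact lt_of_le_of_ne (sq_nonneg _) (Ne.symm (pow_ne_zero 2 (sub_ne_zero.2 hj)))

lemma matVec_sub_sq (A : Fin m → Fin n → ℝ) (x y : Fin n → ℝ) :
    distE (matVec A x) (matVec A y) ^ 2 = ∑ i, (∑ j, A i j * (x j - y j)) ^ 2 := by
  rw [distE_sq]
  refine Finset.sum_congr rfl fun i _ => ?_
  congr 1
  rw [matVec, matVec, ← Finset.sum_sub_distrib]
  exact Finset.sum_congr rfl fun j _ => by ring

end helpers


set_option maxHeartbeats 1000000 in
/-- with high probability, a random Gaussian matrix induces a graph isomorphism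
of `r`-neighborhood graphs. -/
theorem stmt_4 (n m : ℕ) (X : Finset (Fin n → ℝ)) (r : ℝ) (hr : 0 < r)
    (ε : ℝ) (hε0 : 0 < ε) (hε1 : ε < 1)
    (hgap : ∀ x ∈ X,
      ε < min
        ((r ^ 2 - maxNbrVal distE X r (fun a b => distE a b ^ 2) x) /
          maxNbrVal distE X r (fun a b => distE a b ^ 2) x)
        ((minNonNbrVal distE X r (fun a b => distE a b ^ 2) x - r ^ 2) /
          minNonNbrVal distE X r (fun a b => distE a b ^ 2) x)) :
    ENNReal.ofReal
        (1 - (X.card : ℝ) * ((X.card : ℝ) - 1) * Real.exp ((m : ℝ) / 4 * (ε ^ 3 - ε ^ 2))) ≤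
      gaussMat m n (m : NNReal)⁻¹
        {A | IsRIso distE distE X r (matVec A)} := by
  classical
  haveI : IsProbabilityMeasure (gaussMat m n (m : NNReal)⁻¹) := by
    unfold gaussMat; infer_instance
  set μ := gaussMat m n (m : NNReal)⁻¹ with hμ
  set g : (Fin n → ℝ) → (Fin n → ℝ) → ℝ := fun a b => distE a b ^ 2 with hg
  set β := Real.exp ((m : ℝ) / 4 * (ε ^ 3 - ε ^ 2)) with hβ
  -- empty case
  by_cases hX : X = ∅
  · subst hX
    have hiso : ∀ A : Fin m → Fin n → ℝ, IsRIso distE distE ∅ r (matVec A) := by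
      intro A
      constructor
      · intro a ha; simp at ha
      · intro x hx; simp at hx
    have hset : {A : Fin m → Fin n → ℝ | IsRIso distE distE ∅ r (matVec A)} = Set.univ := by
      ext A; simp [hiso A]
    rw [hset]
    simp [measure_univ]
  -- X nonempty : card ≥ 2
  obtain ⟨x0, hx0⟩ := Finset.nonempty_of_ne_empty hX
  have hcard2 : 2 ≤ X.card := by
    by_contra hlt
    push_neg at hlt
    interval_cases h : X.card
    · exact hX (Finset.card_eq_zero.1 h)
    · obtain ⟨z, hz⟩ := Finset.card_eq_one.1 h
      have hset : {s : ℝ | ∃ y, RAdj distE X r x0 y ∧ s = g x0 y} = ∅ := by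
        ext s
        simp only [Set.mem_setOf_eq, Set.mem_empty_iff_false, iff_false]
        rintro ⟨y, ⟨hne, hxX, hyX, _⟩, _⟩
        rw [hz] at hxX hyX
        simp only [Finset.mem_singleton] at hxX hyX
        exact hne (hxX.trans hyX.symm)
      have := hgap x0 hx0
      rw [maxNbrVal, hset, Real.sSup_empty, sub_zero, div_zero] at this
      have h2 := (lt_min_iff.1 this).1
      linarith
  have hcard2' : (2 : ℝ) ≤ (X.card : ℝ) := by exact_mod_cast hcard2
  -- m = 0 case
  rcases Nat.eq_zero_or_pos m with hm | hm
  · subst hm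
    have hβ1 : β = 1 := by rw [hβ]; norm_num
    have hneg : 1 - (X.card : ℝ) * ((X.card : ℝ) - 1) * β ≤ 0 := by
      rw [hβ1]; nlinarith
    rw [ENNReal.ofReal_eq_zero.2 hneg]
    exact zero_le
  -- main case
  set v : NNReal := (m : NNReal)⁻¹ with hvdef
  have hvm : (v : ℝ) = (m : ℝ)⁻¹ := by
    rw [hvdef]; push_cast; ring
  have hv : 0 < (v : ℝ) := by
    rw [hvm]
    exact inv_pos.2 (Nat.cast_pos.2 hm)
  -- the bad events
  set Z : (Fin n → ℝ) × (Fin n → ℝ) → (Fin m → Fin n → ℝ) → ℝ :=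
    fun p A => ∑ i, (∑ j, A i j * (p.1 j - p.2 j)) ^ 2 with hZ
  set Wf : (Fin n → ℝ) × (Fin n → ℝ) → ℝ := fun p => ∑ j, (p.1 j - p.2 j) ^ 2 with hWf
  set E : (Fin n → ℝ) × (Fin n → ℝ) → Set (Fin m → Fin n → ℝ) := fun p =>
    if WellOrderingRel p.1 p.2 then {A | (1 + ε) * Wf p ≤ Z p A}
    else {A | Z p A ≤ (1 - ε) * Wf p} with hE
  have hWfpos : ∀ p : (Fin n → ℝ) × (Fin n → ℝ), p.1 ≠ p.2 → 0 < Wf p := by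
    intro p hne
    show 0 < ∑ j, (p.1 j - p.2 j) ^ 2
    rw [← distE_sq]
    exact distE_sq_pos hne
  have hEbound : ∀ p ∈ X.offDiag, μ (E p) ≤ ENNReal.ofReal β := by
    intro p hp
    rw [Finset.mem_offDiag] at hp
    have hu : 0 < ∑ j, (p.1 j - p.2 j) ^ 2 := hWfpos p hp.2.2
    rw [hE]
    by_cases hw : WellOrderingRel p.1 p.2
    · simp only [if_pos hw]
      exact tail_up hv hvm hm (fun j => p.1 j - p.2 j) hu ε hε0 hε1
    · simp only [if_neg hw]
      exact tail_down hv hvm hm (fun j => p.1 j - p.2 j) hu ε hε0 hε1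
  -- good matrices give isomorphisms
  have hGood : ∀ A : Fin m → Fin n → ℝ, A ∉ ⋃ p ∈ X.offDiag, E p →
      IsRIso distE distE X r (matVec A) := by
    intro A hA
    have hnot : ∀ p ∈ X.offDiag, A ∉ E p := by
      intro p hp hmem
      exact hA (Set.mem_biUnion hp hmem)
    have hZsym : ∀ x y : Fin n → ℝ, Z (y, x) A = Z (x, y) A := by
      intro x y
      rw [hZ]
      refine Finset.sum_congr rfl fun i _ => ?_
      have h1 : ∑ j, A i j * ((y, x).1 j - (y, x).2 j)
          = -(∑ j, A i j * ((x, y).1 j - (x, y).2 j)) := by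
        rw [← Finset.sum_neg_distrib]
        exact Finset.sum_congr rfl fun j _ => by ring
      rw [h1, neg_pow_two]
    have hWsym : ∀ x y : Fin n → ℝ, Wf (y, x) = Wf (x, y) := by
      intro x y
      rw [hWf]
      exact Finset.sum_congr rfl fun j _ => by ring
    have key : ∀ x ∈ X, ∀ y ∈ X, x ≠ y →
        (1 - ε) * Wf (x, y) < Z (x, y) A ∧ Z (x, y) A < (1 + ε) * Wf (x, y) := by
      intro x hx y hy hne
      have hp1 : ((x, y) : _ × _) ∈ X.offDiag := Finset.mem_offDiag.2 ⟨hx, hy, hne⟩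
      have hp2 : ((y, x) : _ × _) ∈ X.offDiag := Finset.mem_offDiag.2 ⟨hy, hx, hne.symm⟩
      have hA1 := hnot _ hp1
      have hA2 := hnot _ hp2
      rcases trichotomous_of WellOrderingRel x y with hw | hw | hw
      · have hnyx : ¬ WellOrderingRel y x := fun hyx =>
          (irrefl_of WellOrderingRel x) (trans_of WellOrderingRel hw hyx)
        rw [hE] at hA1 hA2
        simp only [if_pos hw, if_neg hnyx, Set.mem_setOf_eq] at hA1 hA2
        push_neg at hA1 hA2
        refine ⟨?_, hA1⟩
        rw [← hZsym x y, ← hWsym x y]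
        exact hA2
      · exact absurd hw hne
      · have hnxy : ¬ WellOrderingRel x y := fun hxy =>
          (irrefl_of WellOrderingRel y) (trans_of WellOrderingRel hw hxy)
        rw [hE] at hA1 hA2
        simp only [if_pos hw, if_neg hnxy, Set.mem_setOf_eq] at hA1 hA2
        push_neg at hA1 hA2
        constructor
        · exact hA1
        · rw [← hZsym x y, ← hWsym x y]
          exact hA2
    have hZdist : ∀ x y : Fin n → ℝ,
        Z (x, y) A = distE (matVec A x) (matVec A y) ^ 2 :=
      fun x y => (matVec_sub_sq A x y).symm
    have hWg : ∀ x y : Fin n → ℝ, Wf (x, y) = g x y := by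
      intro x y
      rw [hWf, hg]
      simp only []
      rw [distE_sq]
    have hinj : Set.InjOn (matVec A) X := by
      intro x hx y hy hψ
      by_contra hne
      have hk := (key x hx y hy hne).1
      have hZ0 : Z (x, y) A = 0 := by
        rw [hZdist, hψ]
        have : distE (matVec A y) (matVec A y) = 0 := by
          rw [distE, sub_self]
          simp [euclNorm]
        rw [this]
        norm_num
      have hWp : 0 < Wf (x, y) := hWfpos _ hne
      nlinarith
    refine ⟨hinj, ?_⟩
    intro x hx y hy
    by_cases hne : x = y
    · subst hne
      constructor
      · rintro ⟨hnx, _⟩; exact absurd rfl hnx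
      · rintro ⟨hnx, _⟩; exact absurd rfl hnx
    have hk := key x hx y hy hne
    have hψne : matVec A x ≠ matVec A y := fun h => hne (hinj hx hy h)
    have hWp : 0 < Wf (x, y) := hWfpos _ hne
    constructor
    · rintro ⟨_, _, _, hd⟩
      refine ⟨hψne, Finset.mem_image_of_mem _ hx, Finset.mem_image_of_mem _ hy, ?_⟩
      -- use maxNbrVal bound
      set S := {s : ℝ | ∃ y', RAdj distE X r x y' ∧ s = g x y'} with hS
      have hSfin : S.Finite := by
        refine Set.Finite.subset (X.finite_toSet.image (g x)) ?_
        rintro s ⟨y', hR, rfl⟩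
        exact ⟨y', hR.2.2.1, rfl⟩
      have hmem : g x y ∈ S := ⟨y, ⟨hne, hx, hy, hd⟩, rfl⟩
      have hWM : Wf (x, y) ≤ maxNbrVal distE X r g x := by
        rw [hWg]
        exact le_csSup hSfin.bddAbove hmem
      have hMpos : 0 < maxNbrVal distE X r g x := lt_of_lt_of_le hWp hWM
      have hgx := (lt_min_iff.1 (hgap x hx)).1
      have hεM : ε * maxNbrVal distE X r g x
          < r ^ 2 - maxNbrVal distE X r g x := by
        rw [lt_div_iff₀ hMpos] at hgx
        linarith
      have hZr : Z (x, y) A < r ^ 2 := by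
        have h2 : Z (x, y) A < (1 + ε) * Wf (x, y) := hk.2
        have h3 : (1 + ε) * Wf (x, y) ≤ (1 + ε) * maxNbrVal distE X r g x :=
          mul_le_mul_of_nonneg_left hWM (by linarith)
        nlinarith
      rw [hZdist] at hZr
      have hd0 : 0 ≤ distE (matVec A x) (matVec A y) := distE_nonneg _ _
      nlinarith
    · rintro ⟨_, _, _, hd⟩
      refine ⟨hne, hx, hy, ?_⟩
      by_contra hnotlt
      -- y is a non-neighbor at distance ≥ r
      set S := {s : ℝ | ∃ y' ∈ X, y' ≠ x ∧ ¬ RAdj distE X r x y' ∧ s = g x y'} with hS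
      have hSfin : S.Finite := by
        refine Set.Finite.subset (X.finite_toSet.image (g x)) ?_
        rintro s ⟨y', hy', _, _, rfl⟩
        exact ⟨y', hy', rfl⟩
      have hmem : g x y ∈ S :=
        ⟨y, hy, Ne.symm hne, fun hR => hnotlt hR.2.2.2, rfl⟩
      have hmW : minNonNbrVal distE X r g x ≤ Wf (x, y) := by
        rw [hWg]
        exact csInf_le hSfin.bddBelow hmem
      have hrm : r ^ 2 ≤ minNonNbrVal distE X r g x := by
        refine le_csInf ⟨g x y, hmem⟩ ?_
        rintro s ⟨y', hy', hne', hnR, rfl⟩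
        have hge : r ≤ distE x y' := by
          by_contra hlt
          push_neg at hlt
          exact hnR ⟨Ne.symm hne', hx, hy', hlt⟩
        calc r ^ 2 ≤ distE x y' ^ 2 := by nlinarith [distE_nonneg x y']
          _ = g x y' := rfl
      have hmpos : 0 < minNonNbrVal distE X r g x :=
        lt_of_lt_of_le (by positivity) hrm
      have hgx := (lt_min_iff.1 (hgap x hx)).2
      have hεm : ε * minNonNbrVal distE X r g x
          < minNonNbrVal distE X r g x - r ^ 2 := by
        rw [lt_div_iff₀ hmpos] at hgx
        linarith
      have h1 : r ^ 2 < (1 - ε) * Wf (x, y) := by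
        have h3 : (1 - ε) * minNonNbrVal distE X r g x ≤ (1 - ε) * Wf (x, y) :=
          mul_le_mul_of_nonneg_left hmW (by linarith)
        nlinarith
      have h2 : Z (x, y) A < r ^ 2 := by
        rw [hZdist]
        nlinarith [distE_nonneg (matVec A x) (matVec A y)]
      linarith [hk.1]
  -- final computation
  set T := {A : Fin m → Fin n → ℝ | IsRIso distE distE X r (matVec A)} with hT
  have hsub : Tᶜ ⊆ ⋃ p ∈ X.offDiag, E p := by
    intro A hA
    by_contra hU
    exact hA (hGood A hU)
  have hTc : μ Tᶜ ≤ ENNReal.ofReal ((X.card : ℝ) * ((X.card : ℝ) - 1) * β) := by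
    calc μ Tᶜ ≤ μ (⋃ p ∈ X.offDiag, E p) := measure_mono hsub
      _ ≤ ∑ p ∈ X.offDiag, μ (E p) := measure_biUnion_finset_le _ _
      _ ≤ ∑ _p ∈ X.offDiag, ENNReal.ofReal β := Finset.sum_le_sum hEbound
      _ = (X.offDiag.card : ℝ≥0∞) * ENNReal.ofReal β := by
          rw [Finset.sum_const, nsmul_eq_mul]
      _ = ENNReal.ofReal ((X.card : ℝ) * ((X.card : ℝ) - 1)) * ENNReal.ofReal β := by
          congr 1
          rw [Finset.offDiag_card, ← ENNReal.ofReal_natCast]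
          congr 1
          rw [Nat.cast_sub (Nat.le_mul_of_pos_left X.card (by omega))]
          push_cast
          ring
      _ = ENNReal.ofReal ((X.card : ℝ) * ((X.card : ℝ) - 1) * β) := by
          rw [← ENNReal.ofReal_mul (mul_nonneg (by linarith) (by linarith))]
  have h1 : (1 : ℝ≥0∞) ≤ μ T + μ Tᶜ := by
    rw [← measure_univ (μ := μ), ← Set.union_compl_self T]
    exact measure_union_le T Tᶜ
  have h2 : (1 : ℝ≥0∞) - ENNReal.ofReal ((X.card : ℝ) * ((X.card : ℝ) - 1) * β) ≤ μ T := by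
    rw [tsub_le_iff_right]
    calc (1 : ℝ≥0∞) ≤ μ T + μ Tᶜ := h1
      _ ≤ μ T + ENNReal.ofReal ((X.card : ℝ) * ((X.card : ℝ) - 1) * β) := by
          exact add_le_add_right hTc _
  refine le_trans ?_ h2
  have hb0 : 0 ≤ (X.card : ℝ) * ((X.card : ℝ) - 1) * β :=
    mul_nonneg (mul_nonneg (by linarith) (by linarith)) (by rw [hβ]; positivity)
  rw [ENNReal.ofReal_sub _ hb0]
  simp
end

section
/- Let x, y, z ∈ ℝⁿ be such that z ∉ span{x, y} and ‖x − y‖ ≥ ‖x − z‖. Then for every m ≥ n there exist a matrix A ∈ ℝ^{m×n} with AᵀA = Iₙ (a linear isometry) and a bias vector b ∈ ℝ^m such that ‖σ(Ax + b) − σ(Ay + b)‖ < ‖σ(Ax + b) − σ(Az + b)‖, where σ denotes the ReLU activation applied componentwise. -/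
/-- The componentwise ReLU activation. -/
def reluVec {k : ℕ} (v : Fin k → ℝ) : Fin k → ℝ := fun i => max 0 (v i)

/-- composing a linear isometry with ReLU can change the ordering of pairwise
distances of three points. -/
theorem stmt_11 (n : ℕ) (x y z : Fin n → ℝ)
    (hz : z ∉ Submodule.span ℝ ({x, y} : Set (Fin n → ℝ)))
    (hxy : euclNorm (x - z) ≤ euclNorm (x - y)) :
    ∀ m : ℕ, n ≤ m →
      ∃ (A : Fin m → Fin n → ℝ) (b : Fin m → ℝ),
        (∀ j j' : Fin n, ∑ i, A i j * A i j' = if j = j' then (1 : ℝ) else 0) ∧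
        euclNorm (reluVec (matVec A x + b) - reluVec (matVec A y + b)) <
          euclNorm (reluVec (matVec A x + b) - reluVec (matVec A z + b)) := by
  classical
  intro m hm
  -- n ≥ 1
  rcases Nat.eq_zero_or_pos n with hn0 | hn
  · exfalso
    subst hn0
    have hz0 : z = 0 := Subsingleton.elim z 0
    exact hz (by rw [hz0]; exact Submodule.zero_mem _)
  have hmpos : 0 < m := lt_of_lt_of_le hn hm
  -- work in EuclideanSpace
  set L : (Fin n → ℝ) ≃ₗ[ℝ] EuclideanSpace ℝ (Fin n) :=
    (WithLp.linearEquiv 2 ℝ (Fin n → ℝ)).symm with hL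
  set x' : EuclideanSpace ℝ (Fin n) := L x with hx'
  set y' : EuclideanSpace ℝ (Fin n) := L y with hy'
  set z' : EuclideanSpace ℝ (Fin n) := L z with hz'
  set K : Submodule ℝ (EuclideanSpace ℝ (Fin n)) := Submodule.span ℝ {x', y'} with hK
  have hzK : z' ∉ K := by
    intro hmem
    apply hz
    have : K = (Submodule.span ℝ ({x, y} : Set (Fin n → ℝ))).map (L : (Fin n → ℝ) →ₗ[ℝ] _) := by
      rw [Submodule.map_span]
      simp [Set.image_insert_eq]
      rfl
    rw [this, Submodule.mem_map] at hmem
    obtain ⟨w, hw, hwz⟩ := hmem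
    have : w = z := by
      have := congrArg L.symm hwz
      simpa [hz'] using this
    rwa [← this]
  -- the orthogonal direction
  set u : EuclideanSpace ℝ (Fin n) := z' - (Submodule.orthogonalProjection K z' : EuclideanSpace ℝ (Fin n))
    with hu
  have huK : u ∈ Kᗮ := Submodule.sub_starProjection_mem_orthogonal (K := K) z'
  have hune : u ≠ 0 := by
    intro h
    apply hzK
    have : z' = (Submodule.orthogonalProjection K z' : EuclideanSpace ℝ (Fin n)) := by
      have := sub_eq_zero.mp h
      simpa using this
    rw [this]; exact (Submodule.orthogonalProjection K z').2
  set c : ℝ := ‖u‖ with hc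
  have hcpos : 0 < c := norm_pos_iff.mpr hune
  set u' : EuclideanSpace ℝ (Fin n) := c⁻¹ • u with hu'
  have hu'norm : ‖u'‖ = 1 := by
    rw [hu', norm_smul, norm_inv, norm_norm, ← hc, inv_mul_cancel₀ hcpos.ne']
  have hu'K : u' ∈ Kᗮ := Kᗮ.smul_mem _ huK
  have hux : inner ℝ u' x' = (0 : ℝ) := by
    have hx'K : x' ∈ K := Submodule.subset_span (by simp)
    exact (Submodule.mem_orthogonal' K u').mp hu'K x' hx'K
  have huy : inner ℝ u' y' = (0 : ℝ) := by
    have hy'K : y' ∈ K := Submodule.subset_span (by simp)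
    exact (Submodule.mem_orthogonal' K u').mp hu'K y' hy'K
  have huz : inner ℝ u' z' = (c : ℝ) := by
    have h1 : inner ℝ u z' = (c ^ 2 : ℝ) := by
      have hdecomp : z' = u + (Submodule.orthogonalProjection K z' : EuclideanSpace ℝ (Fin n)) := by
        rw [hu, sub_add_cancel]
      rw [hdecomp, inner_add_right]
      have h2 : inner ℝ u ((Submodule.orthogonalProjection K z' : EuclideanSpace ℝ (Fin n))) = (0 : ℝ) :=
        (Submodule.mem_orthogonal' K u).mp huK _ (Submodule.orthogonalProjection K z').2
      rw [h2, real_inner_self_eq_norm_sq, ← hc]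
      ring
    rw [hu', real_inner_smul_left, h1]
    field_simp [pow_two]
  -- extend u' to an orthonormal basis
  have hn' : Nonempty (Fin n) := ⟨⟨0, hn⟩⟩
  set i0 : Fin n := ⟨0, hn⟩ with hi0
  have hcard : Module.finrank ℝ (EuclideanSpace ℝ (Fin n)) = Fintype.card (Fin n) := by
    simp
  have horth : Orthonormal ℝ (({i0} : Set (Fin n)).restrict (fun _ => u')) := by
    constructor
    · intro i; exact hu'norm
    · intro i j hij
      exfalso
      exact hij (Subtype.ext (by rw [i.2, j.2]))
  obtain ⟨B, hB⟩ := horth.exists_orthonormalBasis_extension_of_card_eq hcard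
  have hBi0 : B i0 = u' := hB i0 rfl
  -- the matrix
  set M : Matrix (Fin n) (Fin n) ℝ := fun i j => B i j with hM
  have hMMT : M * M.transpose = 1 := by
    ext i i'
    have := orthonormal_iff_ite.mp B.orthonormal i i'
    simp only [PiLp.inner_apply, RCLike.inner_apply, conj_trivial] at this
    simp only [Matrix.mul_apply, Matrix.transpose_apply, Matrix.one_apply, hM]
    rw [← this]
    simp only [mul_comm]
    exact Matrix.mul_apply
  have hMTM : M.transpose * M = 1 := mul_eq_one_comm.mp hMMT
  set A : Fin m → Fin n → ℝ := fun i j => if h : (i : ℕ) < n then M ⟨i, h⟩ j else 0 with hA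
  set i0m : Fin m := ⟨0, hmpos⟩ with hi0m
  -- row 0 of A is u'
  have hrow0 : ∀ j, A i0m j = u' j := by
    intro j
    simp only [hA, hi0m]
    rw [dif_pos hn]
    show M i0 j = u' j
    rw [hM]
    show B i0 j = u' j
    rw [hBi0]
  -- column orthonormality
  have hcols : ∀ j j' : Fin n, ∑ i, A i j * A i j' = if j = j' then (1 : ℝ) else 0 := by
    intro j j'
    have hsum : ∑ i : Fin m, A i j * A i j'
        = ∑ i ∈ (Finset.univ : Finset (Fin n)).map (Fin.castLEEmb hm), A i j * A i j' := by
      symm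
      apply Finset.sum_subset (Finset.subset_univ _)
      intro i _ hi
      have hge : ¬ ((i : ℕ) < n) := by
        intro hlt
        apply hi
        simp only [Finset.mem_map, Finset.mem_univ, true_and]
        exact ⟨⟨i, hlt⟩, by ext; simp [Fin.castLEEmb]⟩
      simp [hA, hge]
    rw [hsum, Finset.sum_map]
    have : ∀ k : Fin n, A (Fin.castLEEmb hm k) j * A (Fin.castLEEmb hm k) j'
        = M k j * M k j' := by
      intro k
      have hk : ((Fin.castLEEmb hm k : Fin m) : ℕ) < n := by simp [Fin.castLEEmb]
      simp only [hA]
      rw [dif_pos hk, dif_pos hk]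
      congr 2
    rw [Finset.sum_congr rfl (fun k _ => this k)]
    have := congrFun (congrFun hMTM j) j'
    simp only [Matrix.mul_apply, Matrix.transpose_apply, Matrix.one_apply] at this
    rw [← this]
  -- matVec at row 0
  have hmvx : matVec A x i0m = 0 := by
    have : matVec A x i0m = inner ℝ u' x' := by
      simp only [matVec, PiLp.inner_apply, RCLike.inner_apply, conj_trivial]
      apply Finset.sum_congr rfl
      intro j _
      rw [hrow0 j]
      exact mul_comm _ _
    rw [this, hux]
  have hmvy : matVec A y i0m = 0 := by
    have : matVec A y i0m = inner ℝ u' y' := by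
      simp only [matVec, PiLp.inner_apply, RCLike.inner_apply, conj_trivial]
      apply Finset.sum_congr rfl
      intro j _
      rw [hrow0 j]
      exact mul_comm _ _
    rw [this, huy]
  have hmvz : matVec A z i0m = c := by
    have : matVec A z i0m = inner ℝ u' z' := by
      simp only [matVec, PiLp.inner_apply, RCLike.inner_apply, conj_trivial]
      apply Finset.sum_congr rfl
      intro j _
      rw [hrow0 j]
      exact mul_comm _ _
    rw [this, huz]
  -- the bias
  set b : Fin m → ℝ := fun i => if i = i0m then 0 else
      -(1 + |matVec A x i| + |matVec A y i| + |matVec A z i|) with hb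
  have hbi0 : b i0m = 0 := by rw [hb]; simp
  have hle : ∀ i : Fin m, i ≠ i0m →
      matVec A x i + b i < 0 ∧ matVec A y i + b i < 0 ∧ matVec A z i + b i < 0 := by
    intro i hi
    have hbi : b i = -(1 + |matVec A x i| + |matVec A y i| + |matVec A z i|) := by
      rw [hb]; simp [hi]
    have h1 := le_abs_self (matVec A x i)
    have h2 := le_abs_self (matVec A y i)
    have h3 := le_abs_self (matVec A z i)
    have h4 := abs_nonneg (matVec A x i)
    have h5 := abs_nonneg (matVec A y i)
    have h6 := abs_nonneg (matVec A z i)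
    refine ⟨?_, ?_, ?_⟩ <;> rw [hbi] <;> linarith
  have hrx : reluVec (matVec A x + b) = 0 := by
    funext i
    by_cases hii : i = i0m
    · subst hii
      show max 0 (matVec A x i0m + b i0m) = 0
      rw [hmvx, hbi0]; simp
    · show max 0 (matVec A x i + b i) = 0
      exact max_eq_left (le_of_lt (hle i hii).1)
  have hry : reluVec (matVec A y + b) = 0 := by
    funext i
    by_cases hii : i = i0m
    · subst hii
      show max 0 (matVec A y i0m + b i0m) = 0
      rw [hmvy, hbi0]; simp
    · show max 0 (matVec A y i + b i) = 0
      exact max_eq_left (le_of_lt (hle i hii).2.1)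
  have hrz : reluVec (matVec A z + b) = fun i => if i = i0m then c else 0 := by
    funext i
    by_cases hii : i = i0m
    · subst hii
      show max 0 (matVec A z i0m + b i0m) = if i0m = i0m then c else 0
      rw [hmvz, hbi0, if_pos rfl]
      simpa using hcpos.le
    · show max 0 (matVec A z i + b i) = if i = i0m then c else 0
      rw [if_neg hii]
      exact max_eq_left (le_of_lt (hle i hii).2.2)
  refine ⟨A, b, hcols, ?_⟩
  rw [hrx, hry, hrz]
  have hL0 : euclNorm ((0 : Fin m → ℝ) - 0) = 0 := by
    simp [euclNorm]
  have hR : euclNorm ((0 : Fin m → ℝ) - fun i => if i = i0m then c else 0) = c := by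
    unfold euclNorm
    have : ∀ i : Fin m, ((0 : Fin m → ℝ) - fun i => if i = i0m then c else 0) i ^ 2
        = if i = i0m then c ^ 2 else 0 := by
      intro i
      by_cases hii : i = i0m <;> simp [hii]
    rw [Finset.sum_congr rfl (fun i _ => this i), Finset.sum_ite_eq' Finset.univ i0m]
    simp [Real.sqrt_sq hcpos.le]
  rw [hL0, hR]
  exact hcpos
end
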